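/- arXiv:1512.06547 — 2 statements merged into one kernel-verified Lean document; each statement's English description precedes it below -/
import Mathlib

section
/- Let k be a positive integer, Λ a finitely aligned k-graph, R a commutative ring with 1, and let KP_R(Λ) with Kumjian-Pask Λ-family {s_λ, s_{μ*}} be the universal Kumjian-Pask algebra of Λ over R. Suppose π : KP_R(Λ) → A is an R-algebra homomorphism into an R-algebra A such that π(r s_v) ≠ 0 for all r ∈ R\{0} and all v ∈ Λ^0. Then π is injective on the core KP_R(Λ)_0 := span_R{s_λ s_{μ*} : λ, μ ∈ Λ, d(λ) = d(μ)}. -/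
/-- A higher-rank graph (`k`-graph): a countable small category together with a degree
functor `d` into `ℕᵏ` satisfying the unique factorisation property.  The morphisms form the
type `Path`; the objects (vertices) are identified with the identity paths via `vertex`.
Composition `comp p q` is only meaningful when `src p = rng q`; all axioms are stated under
this compatibility assumption. -/
structure KGraph (k : ℕ) where
  Obj : Type
  Path : Type
  countable_obj : Countable Obj
  countable_path : Countable Path
  src : Path → Obj
  rng : Path → Obj
  vertex : Obj → Path
  comp : Path → Path → Path
  deg : Path → Fin k → ℕ
  src_vertex : ∀ v, src (vertex v) = v
  rng_vertex : ∀ v, rng (vertex v) = v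
  deg_vertex : ∀ v, deg (vertex v) = 0
  vertex_comp : ∀ p, comp (vertex (rng p)) p = p
  comp_vertex : ∀ p, comp p (vertex (src p)) = p
  src_comp : ∀ p q, src p = rng q → src (comp p q) = src q
  rng_comp : ∀ p q, src p = rng q → rng (comp p q) = rng p
  deg_comp : ∀ p q, src p = rng q → deg (comp p q) = deg p + deg q
  comp_assoc : ∀ p q r, src p = rng q → src q = rng r →
    comp (comp p q) r = comp p (comp q r)
  factorisation : ∀ (p : Path) (m n : Fin k → ℕ), deg p = m + n →
    ∃! x : Path × Path, src x.1 = rng x.2 ∧ deg x.1 = m ∧ deg x.2 = n ∧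
      comp x.1 x.2 = p

namespace KGraph

variable {k : ℕ} (Λ : KGraph k)

/-- `Λ^min(p,q)`: the pairs `(ρ,τ)` with `pρ = qτ` a minimal common extension of `p` and `q`. -/
def minPairs (p q : Λ.Path) : Set (Λ.Path × Λ.Path) :=
  {x | Λ.src p = Λ.rng x.1 ∧ Λ.src q = Λ.rng x.2 ∧
    Λ.comp p x.1 = Λ.comp q x.2 ∧
    Λ.deg (Λ.comp p x.1) = Λ.deg p ⊔ Λ.deg q}

/-- `MCE(p,q)`: minimal common extensions of `p` and `q`. -/
def MCE (p q : Λ.Path) : Set Λ.Path :=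
  {t | Λ.deg t = Λ.deg p ⊔ Λ.deg q ∧
    (∃ r, Λ.src p = Λ.rng r ∧ Λ.comp p r = t) ∧
    (∃ r, Λ.src q = Λ.rng r ∧ Λ.comp q r = t)}

/-- `Λ` is finitely aligned if all the sets `Λ^min(p,q)` are finite. -/
def FinitelyAligned : Prop := ∀ p q, (Λ.minPairs p q).Finite

/-- `E ⊆ vΛ` is exhaustive. -/
def Exhaustive (v : Λ.Obj) (E : Set Λ.Path) : Prop :=
  ∀ p, Λ.rng p = v → ∃ q ∈ E, (Λ.minPairs p q).Nonempty

/-- `E` is a finite exhaustive subset of `vΛ \ {v}`, i.e. an element of `FE(Λ)`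
with range vertex `v`. -/
def FE (v : Λ.Obj) (E : Set Λ.Path) : Prop :=
  E.Finite ∧ (∀ p ∈ E, Λ.rng p = v ∧ p ≠ Λ.vertex v) ∧ Λ.Exhaustive v E

/-- `Ext(p; E)`. -/
def extSet (p : Λ.Path) (E : Set Λ.Path) : Set Λ.Path :=
  ⋃ q ∈ E, {r | ∃ t, (r, t) ∈ Λ.minPairs p q}

section Family

variable {A : Type} [NonUnitalRing A]

/-- (KP1): the vertex elements are mutually orthogonal idempotents. -/
def KP1 (S : Λ.Path → A) : Prop :=
  (∀ v, S (Λ.vertex v) * S (Λ.vertex v) = S (Λ.vertex v)) ∧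
  ∀ v w, v ≠ w → S (Λ.vertex v) * S (Λ.vertex w) = 0

/-- (KP2): multiplicativity on composable paths and ghost paths.  Here `T μ` plays the
role of `S_{μ*}`. -/
def KP2 (S T : Λ.Path → A) : Prop :=
  ∀ p q, Λ.src p = Λ.rng q →
    S p * S q = S (Λ.comp p q) ∧ T q * T p = T (Λ.comp p q)

/-- (KP3): `S_{p*} S_q = ∑_{(ρ,τ) ∈ Λ^min(p,q)} S_ρ S_{τ*}` (empty sum read as `0`). -/
def KP3 (S T : Λ.Path → A) : Prop :=
  ∀ p q, T p * S q = ∑ᶠ x ∈ Λ.minPairs p q, S x.1 * T x.2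

/-- (KP4): `∏_{p ∈ E} (S_v - S_p S_{p*}) = 0` for every finite exhaustive
`E ⊆ vΛ \ {v}`.  The product is implemented as a fold over any duplicate-free list
enumerating `E`, with the harmless extra idempotent factor `S_v` in front. -/
def KP4 (S T : Λ.Path → A) : Prop :=
  ∀ (v : Λ.Obj) (l : List Λ.Path), l.Nodup → Λ.FE v {p | p ∈ l} →
    (l.map fun p => S (Λ.vertex v) - S p * T p).foldl (· * ·) (S (Λ.vertex v)) = 0

/-- A Kumjian–Pask `Λ`-family in a (not necessarily unital) ring: `S p` represents `s_p`
and `T p` represents the ghost element `s_{p*}`, with `T` and `S` agreeing on vertices. -/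
def IsKPFamily (S T : Λ.Path → A) : Prop :=
  (∀ v, T (Λ.vertex v) = S (Λ.vertex v)) ∧
  Λ.KP1 S ∧ Λ.KP2 S T ∧ Λ.KP3 S T ∧ Λ.KP4 S T

end Family

/-- `(B, s, t)` is *the* (universal) Kumjian–Pask algebra of `Λ` over `R`:
`(s, t)` is a Kumjian–Pask `Λ`-family generating `B`, and every Kumjian–Pask `Λ`-family
in an `R`-algebra `A` factors uniquely through it. -/
def IsUniversalKP (R : Type) [CommRing R] (B : Type) [NonUnitalRing B]
    [Module R B] [SMulCommClass R B B] [IsScalarTower R B B]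
    (s t : Λ.Path → B) : Prop :=
  Λ.IsKPFamily s t ∧
  NonUnitalAlgebra.adjoin R (Set.range s ∪ Set.range t) = ⊤ ∧
  ∀ (A : Type) [NonUnitalRing A] [Module R A] [SMulCommClass R A A]
    [IsScalarTower R A A] (S T : Λ.Path → A), Λ.IsKPFamily S T →
      ∃! π : B →ₙₐ[R] A, (∀ p, π (s p) = S p) ∧ (∀ p, π (t p) = T p)

/-- A boundary path of `Λ`: a degree-preserving functor `x : Ω_{k,m} → Λ`
(for `m = deg x ∈ (ℕ∪{∞})ᵏ`), recorded via its segments `seg p q = x(p,q)`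
for `p ≤ q ≤ m` (the value of `seg` outside this domain is junk), and satisfying
the boundary-path condition with respect to finite exhaustive sets. -/
structure BoundaryPath (Λ : KGraph k) where
  deg : Fin k → ℕ∞
  seg : (Fin k → ℕ) → (Fin k → ℕ) → Λ.Path
  deg_seg : ∀ p q, p ≤ q → (∀ i, (q i : ℕ∞) ≤ deg i) → Λ.deg (seg p q) = q - p
  seg_self : ∀ p, (∀ i, (p i : ℕ∞) ≤ deg i) →
    seg p p = Λ.vertex (Λ.src (seg p p))
  src_seg : ∀ p q r, p ≤ q → q ≤ r → (∀ i, (r i : ℕ∞) ≤ deg i) →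
    Λ.src (seg p q) = Λ.rng (seg q r)
  comp_seg : ∀ p q r, p ≤ q → q ≤ r → (∀ i, (r i : ℕ∞) ≤ deg i) →
    Λ.comp (seg p q) (seg q r) = seg p r
  boundary : ∀ n : Fin k → ℕ, (∀ i, (n i : ℕ∞) ≤ deg i) →
    ∀ E : Set Λ.Path, Λ.FE (Λ.src (seg n n)) E →
      ∃ p ∈ E, (∀ i, ((n + Λ.deg p) i : ℕ∞) ≤ deg i) ∧ seg n (n + Λ.deg p) = p

namespace BoundaryPath

variable {Λ : KGraph k}

/-- The vertex `x(n)` of a boundary path. -/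
def vtx (x : Λ.BoundaryPath) (n : Fin k → ℕ) : Λ.Obj := Λ.src (x.seg n n)

/-- The range `r(x) = x(0)` of a boundary path. -/
def rng (x : Λ.BoundaryPath) : Λ.Obj := x.vtx 0

end BoundaryPath

/-- `IsShift n x y` says that `y = σⁿ x` is the shift of the boundary path `x` by
`n ≤ d(x)`. -/
def IsShift (n : Fin k → ℕ) (x y : Λ.BoundaryPath) : Prop :=
  (∀ i, (n i : ℕ∞) ≤ x.deg i) ∧
  (∀ i, y.deg i = x.deg i - (n i : ℕ∞)) ∧
  ∀ p q, p ≤ q → (∀ i, (q i : ℕ∞) ≤ y.deg i) → y.seg p q = x.seg (n + p) (n + q)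

/-- `IsConcat p x y` says that `y = p·x` is the concatenation of the path `p` with the
boundary path `x` (so `y(0, d p) = p` and `σ^{d p} y = x`). -/
def IsConcat (p : Λ.Path) (x y : Λ.BoundaryPath) : Prop :=
  Λ.IsShift (Λ.deg p) y x ∧ y.seg 0 (Λ.deg p) = p

/-- A boundary path `x` is aperiodic if distinct paths with source `r(x)` give distinct
concatenations `p·x ≠ q·x`. -/
def AperiodicBP (x : Λ.BoundaryPath) : Prop :=
  ∀ p q, Λ.src p = x.rng → Λ.src q = x.rng → p ≠ q →
    ∀ y, Λ.IsConcat p x y → ¬Λ.IsConcat q x y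

/-- `Λ` is aperiodic: every vertex receives an aperiodic boundary path. -/
def Aperiodic : Prop :=
  ∀ v : Λ.Obj, ∃ x : Λ.BoundaryPath, x.rng = v ∧ Λ.AperiodicBP x

/-- `Λ` is cofinal: for every vertex `v` and boundary path `x` there is `n ≤ d(x)`
with `vΛx(n) ≠ ∅`. -/
def Cofinal : Prop :=
  ∀ (v : Λ.Obj) (x : Λ.BoundaryPath), ∃ n : Fin k → ℕ,
    (∀ i, (n i : ℕ∞) ≤ x.deg i) ∧ ∃ p, Λ.rng p = v ∧ Λ.src p = x.vtx n

/-- The boundary-path groupoid `G_Λ` as a set of triples `(x, m, y)` with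
`σᵖ x = σ^q y` and `m = p - q`. -/
def BPG : Set (Λ.BoundaryPath × (Fin k → ℤ) × Λ.BoundaryPath) :=
  {a | ∃ (p q : Fin k → ℕ) (z : Λ.BoundaryPath),
    (fun i => (p i : ℤ) - (q i : ℤ)) = a.2.1 ∧
    Λ.IsShift p a.1 z ∧ Λ.IsShift q a.2.2 z}

/-- `Z(p) = p ∂Λ`, the cylinder set of boundary paths with prefix `p`. -/
def ZC (p : Λ.Path) : Set Λ.BoundaryPath := {x | ∃ z, Λ.IsConcat p z x}

/-- `Z(p *ₛ q)`. -/
def ZP (p q : Λ.Path) : Set (Λ.BoundaryPath × (Fin k → ℤ) × Λ.BoundaryPath) :=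
  {a | a.2.1 = (fun i => (Λ.deg p i : ℤ) - (Λ.deg q i : ℤ)) ∧
    a.1 ∈ Λ.ZC p ∧ a.2.2 ∈ Λ.ZC q ∧
    ∃ z, Λ.IsShift (Λ.deg p) a.1 z ∧ Λ.IsShift (Λ.deg q) a.2.2 z}

/-- `Z(p *ₛ q \ G)`. -/
def ZPD (p q : Λ.Path) (G : Set Λ.Path) :
    Set (Λ.BoundaryPath × (Fin k → ℤ) × Λ.BoundaryPath) :=
  Λ.ZP p q \ ⋃ ν ∈ G, Λ.ZP (Λ.comp p ν) (Λ.comp q ν)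

/-- The boundary-path groupoid `G_Λ` as a type. -/
abbrev bpSpace : Type := {a // a ∈ Λ.BPG}

/-- The topology on `G_Λ` generated by the basic sets `Z(p *ₛ q \ G)` with `G` finite. -/
def bpTop : TopologicalSpace Λ.bpSpace :=
  TopologicalSpace.generateFrom
    {V | ∃ (p q : Λ.Path) (G : Set Λ.Path), Λ.src p = Λ.src q ∧
      (∀ ν ∈ G, Λ.rng ν = Λ.src p) ∧ G.Finite ∧
      V = Subtype.val ⁻¹' Λ.ZPD p q G}

theorem isShift_zero (x : Λ.BoundaryPath) : Λ.IsShift 0 x x :=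
  ⟨fun i => by simp, fun i => by simp, fun p q _ _ => by simp⟩

/-- The unit space `G_Λ^{(0)}` of the boundary-path groupoid. -/
def unitSet : Set Λ.bpSpace := {a | a.1.2.1 = 0 ∧ a.1.1 = a.1.2.2}

/-- The unit `(x, 0, x)` of `G_Λ` corresponding to a boundary path `x`. -/
def unitOf (x : Λ.BoundaryPath) : Λ.bpSpace :=
  ⟨(x, 0, x), ⟨0, 0, x, by funext i; simp, Λ.isShift_zero x, Λ.isShift_zero x⟩⟩

end KGraph

/-- The core `KP_R(Λ)_0 = span_R{s_p t_q : d(p) = d(q)}`. -/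
def kpCore {k : ℕ} (Λ : KGraph k) (R : Type) [CommRing R] {B : Type}
    [NonUnitalRing B] [Module R B] (s t : Λ.Path → B) : Submodule R B :=
  Submodule.span R {b | ∃ p q : Λ.Path, Λ.deg p = Λ.deg q ∧ b = s p * t q}



namespace KGraph

variable {k : ℕ} {Λ : KGraph k}

/-! ### Basic path lemmas -/

theorem eq_vertex_of_deg_zero {p : Λ.Path} (h : Λ.deg p = 0) :
    p = Λ.vertex (Λ.rng p) := by
  obtain ⟨x, hx, hun⟩ := Λ.factorisation p 0 0 (by simpa using h)
  have h1 : ((Λ.vertex (Λ.rng p), p) : Λ.Path × Λ.Path) = x := by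
    apply hun
    refine ⟨by rw [Λ.src_vertex], Λ.deg_vertex _, h, Λ.vertex_comp p⟩
  have h2 : ((p, Λ.vertex (Λ.src p)) : Λ.Path × Λ.Path) = x := by
    apply hun
    refine ⟨by rw [Λ.rng_vertex], h, Λ.deg_vertex _, Λ.comp_vertex p⟩
  have := h1.trans h2.symm
  exact (congrArg Prod.fst this).symm

theorem comp_cancel_left {p a b : Λ.Path} (ha : Λ.src p = Λ.rng a)
    (hb : Λ.src p = Λ.rng b) (hd : Λ.deg a = Λ.deg b)
    (h : Λ.comp p a = Λ.comp p b) : a = b := by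
  obtain ⟨x, hx, hun⟩ := Λ.factorisation (Λ.comp p a) (Λ.deg p) (Λ.deg a)
    (Λ.deg_comp p a ha)
  have h1 : ((p, a) : Λ.Path × Λ.Path) = x := hun _ ⟨ha, rfl, rfl, rfl⟩
  have h2 : ((p, b) : Λ.Path × Λ.Path) = x := hun _ ⟨hb, rfl, hd.symm, h.symm⟩
  exact congrArg Prod.snd (h1.trans h2.symm)

theorem deg_vertex' (v : Λ.Obj) (i : Fin k) : Λ.deg (Λ.vertex v) i = 0 := by
  rw [Λ.deg_vertex]; rfl

theorem minPairs_self (p : Λ.Path) :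
    Λ.minPairs p p = {(Λ.vertex (Λ.src p), Λ.vertex (Λ.src p))} := by
  ext ⟨ρ, τ⟩
  constructor
  · rintro ⟨h1, h2, h3, h4⟩
    have hd : Λ.deg (Λ.comp p ρ) = Λ.deg p := by rw [h4, sup_idem]
    have hρ0 : Λ.deg ρ = 0 := by
      have := Λ.deg_comp p ρ h1
      rw [this] at hd
      have : Λ.deg p + Λ.deg ρ = Λ.deg p + 0 := by rw [hd, add_zero]
      exact add_left_cancel this
    have hτ0 : Λ.deg τ = 0 := by
      have hd' : Λ.deg (Λ.comp p τ) = Λ.deg p := by rw [← h3, hd]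
      have := Λ.deg_comp p τ h2
      rw [this] at hd'
      have : Λ.deg p + Λ.deg τ = Λ.deg p + 0 := by rw [hd', add_zero]
      exact add_left_cancel this
    have hρ := eq_vertex_of_deg_zero hρ0
    have hτ := eq_vertex_of_deg_zero hτ0
    rw [← h1] at hρ; rw [← h2] at hτ
    simp [Prod.ext_iff, hρ, hτ]
  · rintro h
    simp only [Set.mem_singleton_iff, Prod.ext_iff] at h
    obtain ⟨h1, h2⟩ := h
    subst h1; subst h2
    have hsrc : Λ.src p = Λ.rng (Λ.vertex (Λ.src p)) := (Λ.rng_vertex _).symm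
    refine ⟨hsrc, hsrc, rfl, ?_⟩
    rw [Λ.comp_vertex p, sup_idem]

theorem minPairs_empty_of_ne {p q : Λ.Path} (hd : Λ.deg p = Λ.deg q)
    (hne : p ≠ q) : Λ.minPairs p q = ∅ := by
  ext ⟨ρ, τ⟩
  simp only [Set.mem_empty_iff_false, iff_false]
  rintro ⟨h1, h2, h3, h4⟩
  rw [hd, sup_idem, Λ.deg_comp p ρ h1] at h4
  have hρ0 : Λ.deg ρ = 0 := by
    have h5 : Λ.deg p + Λ.deg ρ = Λ.deg p + 0 := by
      rw [add_zero, h4, hd]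
    exact add_left_cancel h5
  have hτ0 : Λ.deg τ = 0 := by
    have := Λ.deg_comp q τ h2
    rw [← h3, Λ.deg_comp p ρ h1, hρ0, add_zero, hd] at this
    have h5 : Λ.deg q + Λ.deg τ = Λ.deg q + 0 := by rw [add_zero, ← this]
    exact add_left_cancel h5
  apply hne
  have hρ := eq_vertex_of_deg_zero hρ0
  have hτ := eq_vertex_of_deg_zero hτ0
  calc p = Λ.comp p ρ := by rw [hρ, ← h1, Λ.comp_vertex]
  _ = Λ.comp q τ := h3
  _ = q := by rw [hτ, ← h2, Λ.comp_vertex]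

theorem minPairs_comp {μ β : Λ.Path} (h : Λ.src μ = Λ.rng β) :
    Λ.minPairs μ (Λ.comp μ β) = {(β, Λ.vertex (Λ.src β))} := by
  have hdc : Λ.deg (Λ.comp μ β) = Λ.deg μ + Λ.deg β := Λ.deg_comp μ β h
  have hsup : Λ.deg μ ⊔ Λ.deg (Λ.comp μ β) = Λ.deg (Λ.comp μ β) := by
    rw [sup_eq_right, hdc]; intro i; simp
  ext ⟨ρ, τ⟩
  constructor
  · rintro ⟨h1, h2, h3, h4⟩
    rw [hsup, hdc] at h4
    have hdρ : Λ.deg ρ = Λ.deg β := by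
      have := Λ.deg_comp μ ρ h1
      rw [this] at h4
      exact add_left_cancel h4
    have hdτ : Λ.deg τ = 0 := by
      have := Λ.deg_comp (Λ.comp μ β) τ h2
      rw [h3] at h4
      rw [this] at h4
      have h5 : Λ.deg (Λ.comp μ β) + Λ.deg τ = Λ.deg (Λ.comp μ β) + 0 := by
        rw [add_zero, h4, hdc]
      exact add_left_cancel h5
    have hτ := eq_vertex_of_deg_zero hdτ
    rw [← h2] at hτ
    have hcomp : Λ.comp μ ρ = Λ.comp μ β := by
      rw [h3, hτ]
      exact Λ.comp_vertex _
    have hρβ : ρ = β := comp_cancel_left h1 h hdρ hcomp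
    have hsτ : Λ.src (Λ.comp μ β) = Λ.src β := Λ.src_comp μ β h
    rw [hsτ] at hτ
    simp [Prod.ext_iff, hρβ, hτ]
  · rintro hmem
    simp only [Set.mem_singleton_iff, Prod.ext_iff] at hmem
    obtain ⟨h1, h2⟩ := hmem
    rw [show ((ρ, τ) : Λ.Path × Λ.Path) = (β, Λ.vertex (Λ.src β)) from
      Prod.ext h1 h2]
    have hsτ : Λ.src (Λ.comp μ β) = Λ.src β := Λ.src_comp μ β h
    refine ⟨h, by rw [hsτ, Λ.rng_vertex], ?_, hsup.symm⟩
    rw [← hsτ]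
    exact (Λ.comp_vertex _).symm

theorem minPairs_swap {p q : Λ.Path} {x : Λ.Path × Λ.Path}
    (hx : x ∈ Λ.minPairs p q) : x.swap ∈ Λ.minPairs q p := by
  obtain ⟨h1, h2, h3, h4⟩ := hx
  refine ⟨h2, h1, h3.symm, ?_⟩
  show Λ.deg (Λ.comp q x.2) = Λ.deg q ⊔ Λ.deg p
  rw [← h3, h4, sup_comm]

theorem minPairs_empty_symm {p q : Λ.Path} (h : Λ.minPairs p q = ∅) :
    Λ.minPairs q p = ∅ := by
  ext x
  simp only [Set.mem_empty_iff_false, iff_false]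
  intro hx
  have := minPairs_swap hx
  rw [h] at this
  exact this

/-! ### Family lemmas -/

section Family

variable {B : Type} [NonUnitalRing B] {S T : Λ.Path → B}
  (hF : Λ.IsKPFamily S T)

include hF

theorem S_comp {p q : Λ.Path} (h : Λ.src p = Λ.rng q) :
    S p * S q = S (Λ.comp p q) := (hF.2.2.1 p q h).1

theorem T_comp {p q : Λ.Path} (h : Λ.src p = Λ.rng q) :
    T q * T p = T (Λ.comp p q) := (hF.2.2.1 p q h).2

theorem Tv (v : Λ.Obj) : T (Λ.vertex v) = S (Λ.vertex v) := hF.1 v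

theorem Sv_idem (v : Λ.Obj) :
    S (Λ.vertex v) * S (Λ.vertex v) = S (Λ.vertex v) := hF.2.1.1 v

theorem Sv_mul_S {p : Λ.Path} {v : Λ.Obj} (h : Λ.rng p = v) :
    S (Λ.vertex v) * S p = S p := by
  subst h
  rw [S_comp hF (by rw [Λ.src_vertex]), Λ.vertex_comp]

theorem S_mul_Sv {p : Λ.Path} {v : Λ.Obj} (h : Λ.src p = v) :
    S p * S (Λ.vertex v) = S p := by
  subst h
  rw [S_comp hF (Λ.rng_vertex _).symm, Λ.comp_vertex]

theorem T_mul_Sv {p : Λ.Path} {v : Λ.Obj} (h : Λ.rng p = v) :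
    T p * S (Λ.vertex v) = T p := by
  subst h
  rw [← Tv hF, T_comp hF (by rw [Λ.src_vertex]), Λ.vertex_comp]

theorem Sv_mul_T {p : Λ.Path} {v : Λ.Obj} (h : Λ.src p = v) :
    S (Λ.vertex v) * T p = T p := by
  subst h
  rw [← Tv hF, T_comp hF (Λ.rng_vertex _).symm, Λ.comp_vertex]

theorem T_mul_S_self (p : Λ.Path) :
    T p * S p = S (Λ.vertex (Λ.src p)) := by
  rw [hF.2.2.2.1 p p, minPairs_self,
    finsum_mem_singleton]
  simp only
  rw [Tv hF, Sv_idem hF]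

theorem T_mul_S_comp {μ β : Λ.Path} (h : Λ.src μ = Λ.rng β) :
    T μ * S (Λ.comp μ β) = S β := by
  rw [hF.2.2.2.1 μ (Λ.comp μ β), minPairs_comp h, finsum_mem_singleton]
  simp only
  rw [Tv hF, S_mul_Sv hF rfl]

theorem T_mul_S_of_ne {p q : Λ.Path} (hd : Λ.deg p = Λ.deg q) (hne : p ≠ q) :
    T p * S q = 0 := by
  rw [hF.2.2.2.1 p q, minPairs_empty_of_ne hd hne, finsum_mem_empty]

theorem T_mul_S_of_empty {p q : Λ.Path} (h : Λ.minPairs p q = ∅) :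
    T p * S q = 0 := by
  rw [hF.2.2.2.1 p q, h, finsum_mem_empty]

theorem S_mul_T_of_src_ne {p q : Λ.Path} (h : Λ.src p ≠ Λ.src q) :
    S p * T q = 0 := by
  have h1 : S p * T q = (S p * S (Λ.vertex (Λ.src p))) *
      (S (Λ.vertex (Λ.src q)) * T q) := by
    rw [S_mul_Sv hF rfl, Sv_mul_T hF rfl]
  rw [h1, mul_assoc, ← mul_assoc (S (Λ.vertex (Λ.src p))), hF.2.1.2 _ _ h,
    zero_mul, mul_zero]

end Family

section FamilyFin

variable {B : Type} [NonUnitalRing B] {S T : Λ.Path → B}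
  (hF : Λ.IsKPFamily S T) (hΛ : Λ.FinitelyAligned)

include hF hΛ

theorem T_mul_S_sum (p q : Λ.Path) :
    T p * S q = ∑ x ∈ (hΛ p q).toFinset, S x.1 * T x.2 := by
  rw [hF.2.2.2.1 p q, finsum_mem_eq_finite_toFinset_sum _ (hΛ p q)]

theorem e_mul_e (p q : Λ.Path) :
    (S p * T p) * (S q * T q)
      = ∑ x ∈ (hΛ p q).toFinset, S (Λ.comp p x.1) * T (Λ.comp p x.1) := by
  have h1 : (S p * T p) * (S q * T q) = S p * (T p * S q) * T q := by
    noncomm_ring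
  rw [h1, T_mul_S_sum hF hΛ p q, Finset.mul_sum, Finset.sum_mul]
  apply Finset.sum_congr rfl
  intro x hx
  rw [Set.Finite.mem_toFinset] at hx
  obtain ⟨h1, h2, h3, _⟩ := hx
  calc S p * (S x.1 * T x.2) * T q = (S p * S x.1) * (T x.2 * T q) := by
        noncomm_ring
  _ = S (Λ.comp p x.1) * T (Λ.comp q x.2) := by rw [S_comp hF h1, T_comp hF h2]
  _ = S (Λ.comp p x.1) * T (Λ.comp p x.1) := by rw [← h3]

theorem e_comm (p q : Λ.Path) :
    (S p * T p) * (S q * T q) = (S q * T q) * (S p * T p) := by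
  rw [e_mul_e hF hΛ p q, e_mul_e hF hΛ q p]
  apply Finset.sum_nbij' (fun x => Prod.swap x) (fun x => Prod.swap x)
  · intro x hx
    rw [Set.Finite.mem_toFinset] at hx ⊢
    exact minPairs_swap hx
  · intro x hx
    rw [Set.Finite.mem_toFinset] at hx ⊢
    exact minPairs_swap hx
  · intro x _; exact Prod.swap_swap x
  · intro x _; exact Prod.swap_swap x
  · intro x hx
    rw [Set.Finite.mem_toFinset] at hx
    obtain ⟨h1, h2, h3, _⟩ := hx
    rw [show Λ.comp q x.swap.1 = Λ.comp p x.1 from h3.symm]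

end FamilyFin

/-! ### The projections `Pf` -/

section Pf

variable {B : Type} [NonUnitalRing B]

/-- `s_v ∏_{ν ∈ l} (s_v - s_ν t_ν)` as a left fold. -/
def Pf (S T : Λ.Path → B) (v : Λ.Obj) (l : List Λ.Path) : B :=
  l.foldl (fun b ν => b * (S (Λ.vertex v) - S ν * T ν)) (S (Λ.vertex v))

variable {S T : Λ.Path → B}

theorem foldl_mul_assoc (g : Λ.Path → B) (l : List Λ.Path) (x init : B) :
    x * l.foldl (fun b ν => b * g ν) init
      = l.foldl (fun b ν => b * g ν) (x * init) := by
  induction l generalizing init with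
  | nil => rfl
  | cons a l ih => simp only [List.foldl_cons]; rw [ih, mul_assoc]

theorem foldl_zero (g : Λ.Path → B) (l : List Λ.Path) :
    l.foldl (fun b ν => b * g ν) 0 = 0 := by
  induction l with
  | nil => rfl
  | cons a l ih => simp only [List.foldl_cons, zero_mul]; exact ih

theorem Pf_nil (v : Λ.Obj) : Pf S T v [] = S (Λ.vertex v) := rfl

theorem Pf_append (v : Λ.Obj) (l : List Λ.Path) (ν : Λ.Path) :
    Pf S T v (l ++ [ν]) = Pf S T v l * (S (Λ.vertex v) - S ν * T ν) := by
  simp [Pf, List.foldl_append]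

variable (hF : Λ.IsKPFamily S T) (hΛ : Λ.FinitelyAligned)
include hF

theorem Sv_mul_e {ν : Λ.Path} {v : Λ.Obj} (h : Λ.rng ν = v) :
    S (Λ.vertex v) * (S ν * T ν) = S ν * T ν := by
  rw [← mul_assoc, Sv_mul_S hF h]

theorem e_mul_Sv {ν : Λ.Path} {v : Λ.Obj} (h : Λ.rng ν = v) :
    (S ν * T ν) * S (Λ.vertex v) = S ν * T ν := by
  rw [mul_assoc, T_mul_Sv hF h]

include hΛ

theorem F_comm {ν ν' : Λ.Path} {v : Λ.Obj} (h : Λ.rng ν = v)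
    (h' : Λ.rng ν' = v) :
    (S (Λ.vertex v) - S ν * T ν) * (S (Λ.vertex v) - S ν' * T ν')
      = (S (Λ.vertex v) - S ν' * T ν') * (S (Λ.vertex v) - S ν * T ν) := by
  have e1 : (S (Λ.vertex v) - S ν * T ν) * (S (Λ.vertex v) - S ν' * T ν')
      = S (Λ.vertex v) * S (Λ.vertex v) - S (Λ.vertex v) * (S ν' * T ν')
        - (S ν * T ν) * S (Λ.vertex v) + (S ν * T ν) * (S ν' * T ν') := by
    noncomm_ring
  have e2 : (S (Λ.vertex v) - S ν' * T ν') * (S (Λ.vertex v) - S ν * T ν)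
      = S (Λ.vertex v) * S (Λ.vertex v) - S (Λ.vertex v) * (S ν * T ν)
        - (S ν' * T ν') * S (Λ.vertex v) + (S ν' * T ν') * (S ν * T ν) := by
    noncomm_ring
  rw [e1, e2, Sv_mul_e hF h, Sv_mul_e hF h', e_mul_Sv hF h, e_mul_Sv hF h',
    e_comm hF hΛ ν ν', Sv_idem hF]
  abel

theorem Pf_perm {v : Λ.Obj} {l₁ l₂ : List Λ.Path} (h : l₁.Perm l₂)
    (hl : ∀ ν ∈ l₁, Λ.rng ν = v) : Pf S T v l₁ = Pf S T v l₂ := by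
  suffices H : ∀ init : B, l₁.foldl
      (fun b ν => b * (S (Λ.vertex v) - S ν * T ν)) init
      = l₂.foldl (fun b ν => b * (S (Λ.vertex v) - S ν * T ν)) init from H _
  induction h with
  | nil => intro init; rfl
  | cons x hperm ih =>
    intro init
    simp only [List.foldl_cons]
    exact ih (fun ν hν => hl ν (List.mem_cons_of_mem x hν)) _
  | swap x y l =>
    intro init
    simp only [List.foldl_cons]
    rw [mul_assoc, mul_assoc,
      F_comm hF hΛ (hl y (by simp)) (hl x (by simp))]
  | trans h1 h2 ih1 ih2 =>
    intro init
    rw [ih1 hl init, ih2 (fun ν hν => hl ν (h1.mem_iff.mpr hν)) init]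

theorem Pf_mul_S_eq_zero {v : Λ.Obj} {l : List Λ.Path} {ρ : Λ.Path}
    (hl : ∀ ν ∈ l, Λ.rng ν = v) (hρ : ρ ∈ l) :
    Pf S T v l * S ρ = 0 := by
  classical
  have hperm : l.Perm (l.erase ρ ++ [ρ]) :=
    ((List.perm_cons_erase hρ).trans
      (List.perm_append_singleton ρ (l.erase ρ)).symm)
  rw [Pf_perm hF hΛ hperm hl, Pf_append, mul_assoc]
  have hFρ : (S (Λ.vertex v) - S ρ * T ρ) * S ρ = 0 := by
    rw [sub_mul, Sv_mul_S hF (hl ρ hρ), mul_assoc, T_mul_S_self hF,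
      S_mul_Sv hF rfl, sub_self]
  rw [hFρ, mul_zero]

theorem T_mul_Pf_eq_zero {v : Λ.Obj} {l : List Λ.Path} {ζ : Λ.Path}
    (hl : ∀ ν ∈ l, Λ.rng ν = v) (hζ : ζ ∈ l) :
    T ζ * Pf S T v l = 0 := by
  classical
  have hperm : l.Perm (ζ :: l.erase ζ) := List.perm_cons_erase hζ
  rw [Pf_perm hF hΛ hperm hl]
  show T ζ * List.foldl _ _ _ = 0
  simp only [List.foldl_cons]
  rw [foldl_mul_assoc, ← mul_assoc, T_mul_Sv hF (hl ζ hζ)]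
  have : T ζ * (S (Λ.vertex v) - S ζ * T ζ) = 0 := by
    rw [mul_sub, T_mul_Sv hF (hl ζ hζ), ← mul_assoc, T_mul_S_self hF,
      Sv_mul_T hF rfl, sub_self]
  rw [this, foldl_zero]

omit hΛ

theorem Sv_mul_Pf {v : Λ.Obj} (l : List Λ.Path) :
    S (Λ.vertex v) * Pf S T v l = Pf S T v l := by
  rw [Pf, foldl_mul_assoc, Sv_idem hF]

theorem Pf_mul_Sv {v : Λ.Obj} {l : List Λ.Path}
    (hl : ∀ ν ∈ l, Λ.rng ν = v) :
    Pf S T v l * S (Λ.vertex v) = Pf S T v l := by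
  induction l using List.reverseRecOn with
  | nil => simp only [Pf_nil]; exact Sv_idem hF v
  | append_singleton l ν ih =>
    rw [Pf_append, mul_assoc, sub_mul, Sv_idem hF,
      e_mul_Sv hF (hl ν (by simp))]

include hΛ

theorem F_mul_Pf {v : Λ.Obj} {l : List Λ.Path} {ν : Λ.Path}
    (hν : Λ.rng ν = v) (hl : ∀ ν' ∈ l, Λ.rng ν' = v) :
    (S (Λ.vertex v) - S ν * T ν) * Pf S T v l
      = Pf S T v l * (S (Λ.vertex v) - S ν * T ν) := by
  induction l using List.reverseRecOn with
  | nil =>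
    show _ * S (Λ.vertex v) = S (Λ.vertex v) * _
    rw [sub_mul, mul_sub, Sv_idem hF, Sv_mul_e hF hν, e_mul_Sv hF hν]
  | append_singleton l μ ih =>
    have hμ : Λ.rng μ = v := hl μ (by simp)
    rw [Pf_append, ← mul_assoc,
      ih (fun ν' hν' => hl ν' (List.mem_append_left _ hν')),
      mul_assoc, mul_assoc, F_comm hF hΛ hν hμ]

theorem F_idem {ν : Λ.Path} {v : Λ.Obj} (hν : Λ.rng ν = v) :
    (S (Λ.vertex v) - S ν * T ν) * (S (Λ.vertex v) - S ν * T ν)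
      = S (Λ.vertex v) - S ν * T ν := by
  rw [sub_mul, mul_sub, mul_sub, Sv_idem hF, Sv_mul_e hF hν, e_mul_Sv hF hν]
  have : (S ν * T ν) * (S ν * T ν) = S ν * T ν := by
    rw [mul_assoc, ← mul_assoc (T ν), T_mul_S_self hF, Sv_mul_T hF rfl]
  rw [this]
  abel

theorem Pf_idem {v : Λ.Obj} {l : List Λ.Path}
    (hl : ∀ ν ∈ l, Λ.rng ν = v) :
    Pf S T v l * Pf S T v l = Pf S T v l := by
  induction l using List.reverseRecOn with
  | nil => simp only [Pf_nil]; exact Sv_idem hF v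
  | append_singleton l ν ih =>
    have hν : Λ.rng ν = v := hl ν (by simp)
    have hl' : ∀ ν' ∈ l, Λ.rng ν' = v :=
      fun ν' hν' => hl ν' (List.mem_append_left _ hν')
    rw [Pf_append, mul_assoc, ← mul_assoc (S (Λ.vertex v) - S ν * T ν),
      F_mul_Pf hF hΛ hν hl', mul_assoc, F_idem hF hΛ hν, ← mul_assoc, ih hl']

theorem T_mul_Pf_mul_S {v w : Λ.Obj} {l : List Λ.Path} {ζ : Λ.Path}
    (hζ : Λ.rng ζ = v) (hw : Λ.src ζ = w)
    (hmin : ∀ ν ∈ l, Λ.minPairs ζ ν = ∅)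
    (hl : ∀ ν ∈ l, Λ.rng ν = v) :
    T ζ * Pf S T v l * S ζ = S (Λ.vertex w) := by
  subst hw
  induction l using List.reverseRecOn with
  | nil =>
    show T ζ * S (Λ.vertex v) * S ζ = _
    rw [T_mul_Sv hF hζ, T_mul_S_self hF]
  | append_singleton l ν ih =>
    have hν : Λ.rng ν = v := hl ν (by simp)
    have h0 : T ν * S ζ = 0 :=
      T_mul_S_of_empty hF (minPairs_empty_symm (hmin ν (by simp)))
    have hFS : (S (Λ.vertex v) - S ν * T ν) * S ζ = S ζ := by
      rw [sub_mul, Sv_mul_S hF hζ, mul_assoc, h0, mul_zero, sub_zero]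
    rw [Pf_append, mul_assoc, mul_assoc, hFS, ← mul_assoc]
    exact ih (fun ν' hν' => hmin ν' (List.mem_append_left _ hν'))
      (fun ν' hν' => hl ν' (List.mem_append_left _ hν'))

theorem Pf_eq_zero_of_FE {v : Λ.Obj} {l : List Λ.Path} (hnd : l.Nodup)
    (hFE : Λ.FE v {p | p ∈ l}) : Pf S T v l = 0 := by
  have := hF.2.2.2.2 v l hnd hFE
  rw [List.foldl_map] at this
  exact this

end Pf

/-! ### Minimal common extensions and `∨`-closed sets -/

theorem MCE_finite (hΛ : Λ.FinitelyAligned) (p q : Λ.Path) :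
    (Λ.MCE p q).Finite := by
  apply Set.Finite.subset ((hΛ p q).image (fun x => Λ.comp p x.1))
  rintro t ⟨hdeg, ⟨r, hr1, hr2⟩, ⟨r', hr1', hr2'⟩⟩
  exact ⟨(r, r'), ⟨hr1, hr1', by rw [hr2, hr2'], by rw [hr2]; exact hdeg⟩, hr2⟩

theorem MCE_comm (p q : Λ.Path) : Λ.MCE p q = Λ.MCE q p := by
  unfold MCE
  ext t
  rw [sup_comm]
  simp only [Set.mem_setOf_eq]
  tauto

theorem MCE_eq_of_deg_eq {p q t : Λ.Path} (ht : t ∈ Λ.MCE p q)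
    (hd : Λ.deg t = Λ.deg p) : t = p := by
  obtain ⟨hdeg, ⟨r, hr1, hr2⟩, _⟩ := ht
  have hdr : Λ.deg r = 0 := by
    have h1 := Λ.deg_comp p r hr1
    rw [hr2, hd] at h1
    have : Λ.deg p + 0 = Λ.deg p + Λ.deg r := by rw [add_zero]; exact h1
    exact (add_left_cancel this).symm
  have := eq_vertex_of_deg_zero hdr
  rw [← hr2, this, ← hr1, Λ.comp_vertex]

theorem MCE_eq_of_norm_le {p q t : Λ.Path} (ht : t ∈ Λ.MCE p q)
    (hn : ∑ i : Fin k, Λ.deg t i ≤ ∑ i : Fin k, Λ.deg p i) : t = p := by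
  have hle : ∀ i, Λ.deg p i ≤ Λ.deg t i := by
    intro i
    rw [ht.1, Pi.sup_apply]
    exact le_sup_left
  apply MCE_eq_of_deg_eq ht
  funext i
  by_contra hne
  have hlt : Λ.deg p i < Λ.deg t i := lt_of_le_of_ne (hle i) (fun h => hne h.symm)
  have : ∑ i : Fin k, Λ.deg p i < ∑ i : Fin k, Λ.deg t i :=
    Finset.sum_lt_sum (fun i _ => hle i) ⟨i, Finset.mem_univ i, hlt⟩
  omega

theorem comp_mem_MCE {p q : Λ.Path} {x : Λ.Path × Λ.Path}
    (hx : x ∈ Λ.minPairs p q) : Λ.comp p x.1 ∈ Λ.MCE p q := by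
  obtain ⟨h1, h2, h3, h4⟩ := hx
  exact ⟨h4, ⟨x.1, h1, rfl⟩, ⟨x.2, h2, h3.symm⟩⟩

/-- Every finite set of paths is contained in a finite set closed under
minimal common extensions. -/
theorem exists_veeClosed (hΛ : Λ.FinitelyAligned) (F : Finset Λ.Path) :
    ∃ E : Finset Λ.Path, F ⊆ E ∧
      ∀ p ∈ E, ∀ q ∈ E, ∀ x ∈ Λ.MCE p q, x ∈ E := by
  classical
  set N : ℕ := ∑ i : Fin k, F.sup (fun p => Λ.deg p i) with hN
  set step : Finset Λ.Path → Finset Λ.Path := fun X =>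
    X ∪ X.biUnion (fun p => X.biUnion (fun q => (MCE_finite hΛ p q).toFinset))
    with hstep
  set Es : ℕ → Finset Λ.Path := fun m => step^[m] F with hEs
  have hEsucc : ∀ m, Es (m + 1) = step (Es m) := by
    intro m
    simp only [hEs, Function.iterate_succ_apply']
  have hstep_mem : ∀ X x, x ∈ step X →
      x ∈ X ∨ ∃ p ∈ X, ∃ q ∈ X, x ∈ Λ.MCE p q := by
    intro X x hx
    rcases Finset.mem_union.mp hx with h | h
    · exact Or.inl h
    · right
      obtain ⟨p, hp, h2⟩ := Finset.mem_biUnion.mp h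
      obtain ⟨q, hq, h3⟩ := Finset.mem_biUnion.mp h2
      exact ⟨p, hp, q, hq, (MCE_finite hΛ p q).mem_toFinset.mp h3⟩
  have hstep_mem' : ∀ X x p q, p ∈ X → q ∈ X → x ∈ Λ.MCE p q → x ∈ step X := by
    intro X x p q hp hq hm
    apply Finset.mem_union_right
    exact Finset.mem_biUnion.mpr ⟨p, hp, Finset.mem_biUnion.mpr
      ⟨q, hq, (MCE_finite hΛ p q).mem_toFinset.mpr hm⟩⟩
  have hdegb : ∀ m, ∀ x ∈ Es m, ∀ i, Λ.deg x i ≤ F.sup (fun p => Λ.deg p i) := by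
    intro m
    induction m with
    | zero => exact fun x hx i => Finset.le_sup (f := fun p => Λ.deg p i) hx
    | succ m ih =>
      intro x hx i
      rw [hEsucc] at hx
      rcases hstep_mem _ _ hx with h | ⟨p, hp, q, hq, hm⟩
      · exact ih x h i
      · rw [hm.1, Pi.sup_apply]
        exact sup_le (ih p hp i) (ih q hq i)
  have hnormb : ∀ m, ∀ x ∈ Es m, ∑ i : Fin k, Λ.deg x i ≤ N := by
    intro m x hx
    exact Finset.sum_le_sum (fun i _ => hdegb m x hx i)
  have hgrow : ∀ m, ∀ x ∈ Es (m + 1), x ∉ Es m →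
      m + 1 ≤ ∑ i : Fin k, Λ.deg x i := by
    intro m
    induction m with
    | zero =>
      intro x hx hnx
      rw [hEsucc] at hx
      rcases hstep_mem _ _ hx with h | ⟨p, hp, q, hq, hm⟩
      · exact absurd h hnx
      · by_contra hlt
        push_neg at hlt
        apply hnx
        have : x = p := MCE_eq_of_norm_le hm (by omega)
        rw [this]
        exact hp
    | succ m ih =>
      intro x hx hnx
      rw [hEsucc] at hx
      rcases hstep_mem _ _ hx with h | ⟨p, hp, q, hq, hm⟩
      · exact absurd h hnx
      · by_contra hlt
        push_neg at hlt
        have hxd : ∑ i : Fin k, Λ.deg x i ≤ m + 1 := by omega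
        have hnotboth : p ∉ Es m ∨ q ∉ Es m := by
          by_contra hboth
          push_neg at hboth
          exact hnx (by rw [hEsucc]; exact hstep_mem' _ _ p q hboth.1 hboth.2 hm)
        rcases hnotboth with hr | hr
        · have h1 : m + 1 ≤ ∑ i : Fin k, Λ.deg p i := ih p hp hr
          have : x = p := MCE_eq_of_norm_le hm (by omega)
          rw [this] at hnx
          exact hnx hp
        · have h1 : m + 1 ≤ ∑ i : Fin k, Λ.deg q i := ih q hq hr
          rw [MCE_comm] at hm
          have : x = q := MCE_eq_of_norm_le hm (by omega)
          rw [this] at hnx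
          exact hnx hq
  refine ⟨Es (N + 1), ?_, ?_⟩
  · intro x hx
    have : ∀ m, Es 0 ⊆ Es m := by
      intro m
      induction m with
      | zero => exact Finset.Subset.refl _
      | succ m ih =>
        refine Finset.Subset.trans ih ?_
        rw [hEsucc]
        exact Finset.subset_union_left
    exact this (N + 1) hx
  · intro p hp q hq x hm
    have hx2 : x ∈ Es (N + 2) := by
      rw [hEsucc]
      exact hstep_mem' _ _ p q hp hq hm
    by_contra hnx
    have := hgrow (N + 1) x hx2 hnx
    have := hnormb (N + 2) x hx2
    omega

/-! ### The elements `Θ(σ,τ)` -/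

section Theta

variable {B : Type} [NonUnitalRing B]

/-- The extension set `T_E(τ) = {ν : d(ν) ≠ 0, τν ∈ E}`. -/
def Tset (E : Finset Λ.Path) (τ : Λ.Path) : Set Λ.Path :=
  {ν | Λ.src τ = Λ.rng ν ∧ Λ.deg ν ≠ 0 ∧ Λ.comp τ ν ∈ E}

theorem Tset_finite (E : Finset Λ.Path) (τ : Λ.Path) :
    (Tset E τ).Finite := by
  apply Set.Finite.of_finite_image (f := fun ν => Λ.comp τ ν)
  · apply Set.Finite.subset (E.finite_toSet)
    rintro x ⟨ν, hν, rfl⟩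
    exact hν.2.2
  · intro a ha b hb hab
    simp only at hab
    have hd : Λ.deg a = Λ.deg b := by
      have h1 := Λ.deg_comp τ a ha.1
      have h2 := Λ.deg_comp τ b hb.1
      rw [hab, h2] at h1
      exact (add_left_cancel h1.symm)
    exact comp_cancel_left ha.1 hb.1 hd hab

/-- A duplicate-free list enumerating `T_E(τ)`. -/
noncomputable def Tlist (E : Finset Λ.Path) (τ : Λ.Path) : List Λ.Path :=
  (Tset_finite E τ).toFinset.toList

theorem mem_Tlist {E : Finset Λ.Path} {τ ν : Λ.Path} :
    ν ∈ Tlist E τ ↔ ν ∈ Tset E τ := by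
  rw [Tlist, Finset.mem_toList, Set.Finite.mem_toFinset]

theorem Tlist_nodup (E : Finset Λ.Path) (τ : Λ.Path) :
    (Tlist E τ).Nodup := Finset.nodup_toList _

theorem Tlist_rng {E : Finset Λ.Path} {τ : Λ.Path} :
    ∀ ν ∈ Tlist E τ, Λ.rng ν = Λ.src τ :=
  fun ν hν => (mem_Tlist.mp hν).1.symm

/-- `Θ(σ,τ) = s_σ (∏_{ν ∈ T_E(τ)} (s_v - s_ν t_ν)) t_τ`. -/
noncomputable def Theta (S T : Λ.Path → B) (E : Finset Λ.Path)
    (σ τ : Λ.Path) : B :=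
  S σ * Pf S T (Λ.src τ) (Tlist E τ) * T τ

variable {S T : Λ.Path → B} (hF : Λ.IsKPFamily S T) (hΛ : Λ.FinitelyAligned)
  {E : Finset Λ.Path}
  (hE : ∀ p ∈ E, ∀ q ∈ E, ∀ x ∈ Λ.MCE p q, x ∈ E)

include hF hΛ hE

theorem Theta_mul_Q_of_ne {σ τ τ₀ : Λ.Path} (hτ : τ ∈ E) (hτ₀ : τ₀ ∈ E)
    (hne : τ ≠ τ₀) : Theta S T E σ τ * Theta S T E τ₀ τ₀ = 0 := by
  have key : ∀ x ∈ (hΛ τ τ₀).toFinset,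
      Pf S T (Λ.src τ) (Tlist E τ) *
        ((S x.1 * T x.2) * (Pf S T (Λ.src τ₀) (Tlist E τ₀) * T τ₀)) = 0 := by
    intro x hx
    rw [Set.Finite.mem_toFinset] at hx
    obtain ⟨h1, h2, h3, h4⟩ := hx
    by_cases hdx : Λ.deg x.1 = 0
    · -- then `τ` extends `τ₀` properly and `T x.2` is killed on the right
      have hx1 : x.1 = Λ.vertex (Λ.src τ) := by
        have := eq_vertex_of_deg_zero hdx
        rw [← h1] at this
        exact this
      have hττ₀ : τ = Λ.comp τ₀ x.2 := by
        rw [← h3, hx1]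
        exact (Λ.comp_vertex τ).symm
      have hdx2 : Λ.deg x.2 ≠ 0 := by
        intro h0
        apply hne
        have := eq_vertex_of_deg_zero h0
        rw [← h2] at this
        rw [hττ₀, this, Λ.comp_vertex]
      have hx2mem : x.2 ∈ Tlist E τ₀ :=
        mem_Tlist.mpr ⟨h2, hdx2, by rw [← hττ₀]; exact hτ⟩
      have h0 : T x.2 * Pf S T (Λ.src τ₀) (Tlist E τ₀) = 0 :=
        T_mul_Pf_eq_zero hF hΛ Tlist_rng hx2mem
      calc Pf S T (Λ.src τ) (Tlist E τ) *
            ((S x.1 * T x.2) * (Pf S T (Λ.src τ₀) (Tlist E τ₀) * T τ₀))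
          = Pf S T (Λ.src τ) (Tlist E τ) *
            (S x.1 * ((T x.2 * Pf S T (Λ.src τ₀) (Tlist E τ₀)) * T τ₀)) := by
            simp only [mul_assoc]
      _ = 0 := by rw [h0, zero_mul, mul_zero, mul_zero]
    · -- then `x.1` lies in `T_E(τ)` and is killed on the left
      have hx1mem : x.1 ∈ Tlist E τ :=
        mem_Tlist.mpr ⟨h1, hdx, hE τ hτ τ₀ hτ₀ _ (comp_mem_MCE ⟨h1, h2, h3, h4⟩)⟩
      have h0 : Pf S T (Λ.src τ) (Tlist E τ) * S x.1 = 0 :=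
        Pf_mul_S_eq_zero hF hΛ Tlist_rng hx1mem
      calc Pf S T (Λ.src τ) (Tlist E τ) *
            ((S x.1 * T x.2) * (Pf S T (Λ.src τ₀) (Tlist E τ₀) * T τ₀))
          = (Pf S T (Λ.src τ) (Tlist E τ) * S x.1) *
            (T x.2 * (Pf S T (Λ.src τ₀) (Tlist E τ₀) * T τ₀)) := by
            simp only [mul_assoc]
      _ = 0 := by rw [h0, zero_mul]
  calc Theta S T E σ τ * Theta S T E τ₀ τ₀
      = S σ * (Pf S T (Λ.src τ) (Tlist E τ) *
        ((T τ * S τ₀) * (Pf S T (Λ.src τ₀) (Tlist E τ₀) * T τ₀))) := by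
        simp only [Theta, mul_assoc]
  _ = S σ * (Pf S T (Λ.src τ) (Tlist E τ) *
        ((∑ x ∈ (hΛ τ τ₀).toFinset, S x.1 * T x.2) *
          (Pf S T (Λ.src τ₀) (Tlist E τ₀) * T τ₀))) := by
        rw [T_mul_S_sum hF hΛ]
  _ = S σ * ∑ x ∈ (hΛ τ τ₀).toFinset,
        Pf S T (Λ.src τ) (Tlist E τ) *
          ((S x.1 * T x.2) * (Pf S T (Λ.src τ₀) (Tlist E τ₀) * T τ₀)) := by
        rw [Finset.sum_mul, Finset.mul_sum]
  _ = 0 := by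
        rw [Finset.sum_congr rfl key]
        simp

theorem Theta_mul_Q_self {σ τ₀ : Λ.Path} (hτ₀ : τ₀ ∈ E) :
    Theta S T E σ τ₀ * Theta S T E τ₀ τ₀ = Theta S T E σ τ₀ := by
  calc Theta S T E σ τ₀ * Theta S T E τ₀ τ₀
      = S σ * (Pf S T (Λ.src τ₀) (Tlist E τ₀) *
        ((T τ₀ * S τ₀) * (Pf S T (Λ.src τ₀) (Tlist E τ₀) * T τ₀))) := by
        simp only [Theta, mul_assoc]
  _ = S σ * (Pf S T (Λ.src τ₀) (Tlist E τ₀) *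
        (Pf S T (Λ.src τ₀) (Tlist E τ₀) * T τ₀)) := by
        rw [T_mul_S_self hF, ← mul_assoc (S (Λ.vertex (Λ.src τ₀))),
          Sv_mul_Pf hF]
  _ = S σ * (Pf S T (Λ.src τ₀) (Tlist E τ₀) *
        Pf S T (Λ.src τ₀) (Tlist E τ₀)) * T τ₀ := by
        simp only [mul_assoc]
  _ = Theta S T E σ τ₀ := by
        rw [Pf_idem hF hΛ Tlist_rng, Theta]

omit hE

theorem T_mul_Theta_of_ne {σ σ₀ τ : Λ.Path} (hd : Λ.deg σ₀ = Λ.deg σ)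
    (hne : σ₀ ≠ σ) : T σ₀ * Theta S T E σ τ = 0 := by
  rw [Theta, ← mul_assoc, ← mul_assoc, T_mul_S_of_ne hF hd hne,
    zero_mul, zero_mul]

theorem T_mul_Theta_self_mul_S {σ₀ τ₀ : Λ.Path} (hsrc : Λ.src σ₀ = Λ.src τ₀) :
    T σ₀ * Theta S T E σ₀ τ₀ * S τ₀ = Pf S T (Λ.src τ₀) (Tlist E τ₀) := by
  rw [Theta, ← mul_assoc, ← mul_assoc, T_mul_S_self hF, hsrc, Sv_mul_Pf hF,
    mul_assoc, T_mul_S_self hF, Pf_mul_Sv hF Tlist_rng]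

end Theta

/-! ### Expansion of `s_λ t_μ` in terms of the `Θ(σ,τ)` -/

section Expansion

variable {B : Type} [NonUnitalRing B] {R : Type} [CommRing R] [Module R B]
  [SMulCommClass R B B] [IsScalarTower R B B]

/-- The generators `Θ(σ,τ)` of the span used in the expansion. -/
def ThetaGens (S T : Λ.Path → B) (E : Finset Λ.Path) : Set B :=
  {b | ∃ σ τ, Λ.deg σ = Λ.deg τ ∧ Λ.src σ = Λ.src τ ∧ τ ∈ E ∧
    b = Theta S T E σ τ}

variable {S T : Λ.Path → B} (hF : Λ.IsKPFamily S T) (hΛ : Λ.FinitelyAligned)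
  {E : Finset Λ.Path}
  (hE : ∀ p ∈ E, ∀ q ∈ E, ∀ x ∈ Λ.MCE p q, x ∈ E)

include hF hΛ hE

theorem S_mul_T_mem_span (R : Type) [CommRing R] [Module R B]
    [SMulCommClass R B B] [IsScalarTower R B B]
    {lam mu : Λ.Path} (hmu : mu ∈ E) (hd : Λ.deg lam = Λ.deg mu)
    (hs : Λ.src lam = Λ.src mu) :
    S lam * T mu ∈ Submodule.span R (ThetaGens S T E) := by
  classical
  set nrm : Λ.Path → ℕ := fun p => ∑ i : Fin k, Λ.deg p i with hnrm
  set Nb : ℕ := E.sup nrm with hNb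
  have main : ∀ n : ℕ, ∀ lam mu : Λ.Path, mu ∈ E → Λ.deg lam = Λ.deg mu →
      Λ.src lam = Λ.src mu → Nb ≤ nrm mu + n →
      S lam * T mu ∈ Submodule.span R (ThetaGens S T E) := by
    intro n
    induction n using Nat.strong_induction_on with
    | _ n IH =>
      intro lam mu hmu hd hs hn
      -- the correction generators
      set Wg : Set B := {b | ∃ ω, Λ.src mu = Λ.rng ω ∧ Λ.deg ω ≠ 0 ∧
        Λ.comp mu ω ∈ E ∧ b = S (Λ.comp lam ω) * T (Λ.comp mu ω)} with hWg
      have hnrm_ne : ∀ ω : Λ.Path, Λ.deg ω ≠ 0 → 1 ≤ nrm ω := by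
        intro ω hω
        by_contra hlt
        apply hω
        funext i
        have h0 : nrm ω = 0 := by omega
        have := Finset.sum_eq_zero_iff.mp h0 i (Finset.mem_univ i)
        simpa using this
      have hnrm_comp : ∀ p q : Λ.Path, Λ.src p = Λ.rng q →
          nrm (Λ.comp p q) = nrm p + nrm q := by
        intro p q hpq
        simp only [hnrm, Λ.deg_comp p q hpq, Pi.add_apply]
        rw [Finset.sum_add_distrib]
      -- corrections lie in the span, by the inductive hypothesis
      have hWsub : Wg ⊆ ↑(Submodule.span R (ThetaGens S T E)) := by
        rintro b ⟨ω, h1, h2, h3, rfl⟩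
        have hlr : Λ.src lam = Λ.rng ω := hs.trans h1
        have hnc : nrm (Λ.comp mu ω) = nrm mu + nrm ω := hnrm_comp mu ω h1
        have hge1 : 1 ≤ nrm ω := hnrm_ne ω h2
        have hle : nrm (Λ.comp mu ω) ≤ Nb := Finset.le_sup (f := nrm) h3
        have hn1 : 1 ≤ n := by omega
        apply IH (n - 1) (by omega) (Λ.comp lam ω) (Λ.comp mu ω) h3
        · rw [Λ.deg_comp lam ω hlr, Λ.deg_comp mu ω h1, hd]
        · rw [Λ.src_comp lam ω hlr, Λ.src_comp mu ω h1]
        · omega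
      -- right stability of the corrections under multiplication by `e_{τ'}`
      have hstab : ∀ τ', τ' ∈ E → ∀ w ∈ Submodule.span R Wg,
          w * (S τ' * T τ') ∈ Submodule.span R Wg := by
        intro τ' hτ' w hw
        induction hw using Submodule.span_induction with
        | mem b hb =>
          obtain ⟨ω, h1, h2, h3, rfl⟩ := hb
          have hlr : Λ.src lam = Λ.rng ω := hs.trans h1
          have hsrcω : Λ.src (Λ.comp mu ω) = Λ.src ω := Λ.src_comp mu ω h1
          have hsrclamω : Λ.src (Λ.comp lam ω) = Λ.src ω := Λ.src_comp lam ω hlr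
          rw [show S (Λ.comp lam ω) * T (Λ.comp mu ω) * (S τ' * T τ')
              = S (Λ.comp lam ω) * ((T (Λ.comp mu ω) * S τ') * T τ') by
            simp only [mul_assoc]]
          rw [T_mul_S_sum hF hΛ, Finset.sum_mul, Finset.mul_sum]
          apply Submodule.sum_mem
          intro x hx
          rw [Set.Finite.mem_toFinset] at hx
          obtain ⟨hx1, hx2, hx3, hx4⟩ := hx
          have hωx : Λ.src ω = Λ.rng x.1 := by rw [← hsrcω]; exact hx1
          have hterm : S (Λ.comp lam ω) * ((S x.1 * T x.2) * T τ')
              = S (Λ.comp lam (Λ.comp ω x.1)) * T (Λ.comp mu (Λ.comp ω x.1)) := by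
            have e1 : S (Λ.comp lam ω) * S x.1 = S (Λ.comp lam (Λ.comp ω x.1)) := by
              rw [S_comp hF (by rw [hsrclamω]; exact hωx),
                Λ.comp_assoc lam ω x.1 hlr hωx]
            have e2 : T x.2 * T τ' = T (Λ.comp mu (Λ.comp ω x.1)) := by
              rw [T_comp hF hx2, ← hx3, Λ.comp_assoc mu ω x.1 h1 hωx]
            calc S (Λ.comp lam ω) * ((S x.1 * T x.2) * T τ')
                = (S (Λ.comp lam ω) * S x.1) * (T x.2 * T τ') := by
                  simp only [mul_assoc]
            _ = _ := by rw [e1, e2]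
          rw [hterm]
          apply Submodule.subset_span
          refine ⟨Λ.comp ω x.1, ?_, ?_, ?_, rfl⟩
          · rw [Λ.rng_comp ω x.1 hωx]; exact h1
          · intro h0
            apply h2
            funext i
            have hdc := Λ.deg_comp ω x.1 hωx
            rw [h0] at hdc
            have h0' := congrFun hdc.symm i
            simp only [Pi.add_apply, Pi.zero_apply] at h0'
            show Λ.deg ω i = 0
            omega
          · rw [← Λ.comp_assoc mu ω x.1 h1 hωx]
            exact hE (Λ.comp mu ω) h3 τ' hτ' _ (comp_mem_MCE ⟨hx1, hx2, hx3, hx4⟩)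
        | zero => rw [zero_mul]; exact Submodule.zero_mem _
        | add x y hx hy ihx ihy => rw [add_mul]; exact Submodule.add_mem _ ihx ihy
        | smul a x hx ihx => rw [smul_mul_assoc]; exact Submodule.smul_mem _ a ihx
      -- the list recursion
      have hlist : ∀ l : List Λ.Path, (∀ ν ∈ l, ν ∈ Tset E mu) →
          S lam * Pf S T (Λ.src mu) l * T mu - S lam * T mu
            ∈ Submodule.span R Wg := by
        intro l
        induction l using List.reverseRecOn with
        | nil =>
          intro _
          rw [Pf_nil, S_mul_Sv hF hs, sub_self]
          exact Submodule.zero_mem _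
        | append_singleton l ν ih =>
          intro hmem
          obtain ⟨hν1, hν2, hν3⟩ := mem_Tlist.mp (mem_Tlist.mpr
            (hmem ν (by simp)))
          have hmem' : ∀ ν' ∈ l, ν' ∈ Tset E mu :=
            fun ν' hν' => hmem ν' (List.mem_append_left _ hν')
          have hX : S lam * Pf S T (Λ.src mu) (l ++ [ν]) * T mu
              = S lam * Pf S T (Λ.src mu) l * T mu
                - (S lam * Pf S T (Λ.src mu) l * T mu) *
                  (S (Λ.comp mu ν) * T (Λ.comp mu ν)) := by
            have eFT : (S (Λ.vertex (Λ.src mu)) - S ν * T ν) * T mu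
                = T mu - S ν * T (Λ.comp mu ν) := by
              rw [sub_mul, Sv_mul_T hF rfl, mul_assoc, T_comp hF hν1]
            have eR : T mu * (S (Λ.comp mu ν) * T (Λ.comp mu ν))
                = S ν * T (Λ.comp mu ν) := by
              rw [← mul_assoc, T_mul_S_comp hF hν1]
            calc S lam * Pf S T (Λ.src mu) (l ++ [ν]) * T mu
                = S lam * Pf S T (Λ.src mu) l *
                  ((S (Λ.vertex (Λ.src mu)) - S ν * T ν) * T mu) := by
                  rw [Pf_append]; simp only [mul_assoc]
            _ = S lam * Pf S T (Λ.src mu) l * (T mu - S ν * T (Λ.comp mu ν)) := by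
                  rw [eFT]
            _ = S lam * Pf S T (Λ.src mu) l * T mu
                - S lam * Pf S T (Λ.src mu) l *
                  (T mu * (S (Λ.comp mu ν) * T (Λ.comp mu ν))) := by
                  rw [eR, mul_sub]
            _ = _ := by simp only [mul_assoc, mul_sub]
          have hbase : (S lam * T mu) * (S (Λ.comp mu ν) * T (Λ.comp mu ν))
              ∈ Submodule.span R Wg := by
            apply Submodule.subset_span
            refine ⟨ν, hν1, hν2, hν3, ?_⟩
            rw [show S lam * T mu * (S (Λ.comp mu ν) * T (Λ.comp mu ν))
                = S lam * ((T mu * S (Λ.comp mu ν)) * T (Λ.comp mu ν)) by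
              simp only [mul_assoc]]
            rw [T_mul_S_comp hF hν1, ← mul_assoc,
              S_comp hF (hs.trans hν1)]
          have hsplit : S lam * Pf S T (Λ.src mu) (l ++ [ν]) * T mu
              - S lam * T mu
              = (S lam * Pf S T (Λ.src mu) l * T mu - S lam * T mu)
                - ((S lam * Pf S T (Λ.src mu) l * T mu - S lam * T mu) *
                    (S (Λ.comp mu ν) * T (Λ.comp mu ν))
                  + (S lam * T mu) * (S (Λ.comp mu ν) * T (Λ.comp mu ν))) := by
            rw [hX]
            noncomm_ring
          rw [hsplit]
          exact Submodule.sub_mem _ (ih hmem')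
            (Submodule.add_mem _
              (hstab (Λ.comp mu ν) hν3 _ (ih hmem')) hbase)
      have hfull := hlist (Tlist E mu) (fun ν hν => mem_Tlist.mp hν)
      have hTheta : Theta S T E lam mu ∈ Submodule.span R (ThetaGens S T E) :=
        Submodule.subset_span ⟨lam, mu, hd, hs, hmu, rfl⟩
      have hdiff : Theta S T E lam mu - S lam * T mu
          ∈ Submodule.span R (ThetaGens S T E) :=
        (Submodule.span_le.mpr hWsub) hfull
      have : S lam * T mu
          = Theta S T E lam mu - (Theta S T E lam mu - S lam * T mu) := by
        noncomm_ring
      rw [this]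
      exact Submodule.sub_mem _ hTheta hdiff
  exact main Nb lam mu hmu hd hs (by omega)

end Expansion

end KGraph

theorem injective_on_core' {k : ℕ} (hk : 0 < k) (Λ : KGraph k)
    (hΛ : Λ.FinitelyAligned) (R : Type) [CommRing R]
    (B : Type) [NonUnitalRing B] [Module R B] [SMulCommClass R B B]
    [IsScalarTower R B B] (s t : Λ.Path → B)
    (hU : Λ.IsUniversalKP R B s t)
    (A : Type) [NonUnitalRing A] [Module R A] [SMulCommClass R A A]
    [IsScalarTower R A A] (π : B →ₙₐ[R] A)
    (hπv : ∀ r : R, r ≠ 0 → ∀ v, π (r • s (Λ.vertex v)) ≠ 0) :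
    Set.InjOn π (kpCore Λ R s t : Set B) := by
  classical
  obtain ⟨hFam, -, -⟩ := hU
  have hker : ∀ a ∈ kpCore Λ R s t, π a = 0 → a = 0 := by
    intro a ha hπa
    rw [kpCore, Submodule.mem_span_set] at ha
    obtain ⟨c, hcsupp, hcsum⟩ := ha
    -- collect the right legs
    have hpick : ∀ b ∈ c.support, ∃ pq : Λ.Path × Λ.Path,
        Λ.deg pq.1 = Λ.deg pq.2 ∧ b = s pq.1 * t pq.2 := by
      intro b hb
      obtain ⟨p, q, h1, h2⟩ := hcsupp hb
      exact ⟨(p, q), h1, h2⟩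
    set F : Finset Λ.Path :=
      c.support.attach.image (fun b => (hpick b.1 b.2).choose.2) with hFdef
    obtain ⟨E, hFE, hVee⟩ := KGraph.exists_veeClosed hΛ F
    -- `a` lies in the span of the `Θ(σ,τ)`
    have haM : a ∈ Submodule.span R (KGraph.ThetaGens s t E) := by
      rw [← hcsum]
      apply Submodule.sum_mem
      intro b hb
      apply Submodule.smul_mem
      obtain ⟨hdeg, hbeq⟩ := (hpick b hb).choose_spec
      set p := (hpick b hb).choose.1
      set q := (hpick b hb).choose.2
      have hqE : q ∈ E := hFE (Finset.mem_image.mpr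
        ⟨⟨b, hb⟩, Finset.mem_attach _ _, rfl⟩)
      by_cases hsrc : Λ.src p = Λ.src q
      · rw [hbeq]
        exact KGraph.S_mul_T_mem_span hFam hΛ hVee R hqE hdeg hsrc
      · rw [hbeq, KGraph.S_mul_T_of_src_ne hFam hsrc]
        exact Submodule.zero_mem _
    rw [Submodule.mem_span_set] at haM
    obtain ⟨d, hdsupp, hdsum⟩ := haM
    have ha' : a = ∑ b' ∈ d.support, d b' • b' := hdsum.symm
    rw [ha']
    apply Finset.sum_eq_zero
    intro b hb
    obtain ⟨σ, τ, hdeg, hsrc, hτE, hbeq⟩ := hdsupp hb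
    by_cases hexh : Λ.Exhaustive (Λ.src τ) (KGraph.Tset E τ)
    · -- the projection vanishes by (KP4)
      have hFEset : Λ.FE (Λ.src τ) {p | p ∈ KGraph.Tlist E τ} := by
        have hset : {p | p ∈ KGraph.Tlist E τ} = KGraph.Tset E τ :=
          Set.ext (fun p => KGraph.mem_Tlist)
        rw [hset]
        refine ⟨KGraph.Tset_finite E τ, ?_, hexh⟩
        intro p hp
        refine ⟨hp.1.symm, ?_⟩
        intro hpv
        apply hp.2.1
        rw [hpv, Λ.deg_vertex]
      have hPf : KGraph.Pf s t (Λ.src τ) (KGraph.Tlist E τ) = 0 :=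
        KGraph.Pf_eq_zero_of_FE hFam hΛ (KGraph.Tlist_nodup E τ) hFEset
      rw [hbeq, KGraph.Theta, hPf, mul_zero, zero_mul, smul_zero]
    · -- compress down to a vertex and contradict the hypothesis on `π`
      exfalso
      have hz : t σ * (a * KGraph.Theta s t E τ τ) * s τ
          = d b • KGraph.Pf s t (Λ.src τ) (KGraph.Tlist E τ) := by
        have h1 : t σ * (a * KGraph.Theta s t E τ τ) * s τ
            = ∑ b' ∈ d.support,
              d b' • (t σ * (b' * KGraph.Theta s t E τ τ) * s τ) := by
          rw [ha', Finset.sum_mul, Finset.mul_sum, Finset.sum_mul]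
          apply Finset.sum_congr rfl
          intro b' _
          rw [smul_mul_assoc, mul_smul_comm, smul_mul_assoc]
        rw [h1]
        rw [Finset.sum_eq_single b]
        · rw [hbeq, KGraph.Theta_mul_Q_self hFam hΛ hVee hτE,
            KGraph.T_mul_Theta_self_mul_S hFam hΛ hsrc]
        · intro b' hb' hne
          obtain ⟨σ', τ', hdeg', hsrc', hτ'E, hbeq'⟩ := hdsupp hb'
          by_cases hττ : τ' = τ
          · subst hττ
            have hσσ : σ' ≠ σ := by
              intro h
              apply hne
              rw [hbeq', hbeq, h]
            rw [hbeq', KGraph.Theta_mul_Q_self hFam hΛ hVee hτE,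
              KGraph.T_mul_Theta_of_ne hFam hΛ
                (by rw [hdeg, ← hdeg']) hσσ.symm,
              zero_mul, smul_zero]
          · rw [hbeq', KGraph.Theta_mul_Q_of_ne hFam hΛ hVee hτ'E hτE hττ,
              mul_zero, zero_mul, smul_zero]
        · intro hbnot
          exact absurd hb hbnot
      -- a path witnessing non-exhaustiveness
      rw [KGraph.Exhaustive] at hexh
      push_neg at hexh
      obtain ⟨ζ, hζrng, hζ⟩ := hexh
      have hmin : ∀ ν ∈ KGraph.Tlist E τ, Λ.minPairs ζ ν = ∅ := by
        intro ν hν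
        have h2 := hζ ν (KGraph.mem_Tlist.mp hν)
        exact h2
      have hcompress : t ζ * (d b • KGraph.Pf s t (Λ.src τ) (KGraph.Tlist E τ)) * s ζ
          = d b • s (Λ.vertex (Λ.src ζ)) := by
        rw [mul_smul_comm, smul_mul_assoc,
          KGraph.T_mul_Pf_mul_S hFam hΛ hζrng rfl hmin KGraph.Tlist_rng]
      have hπ0 : π (d b • s (Λ.vertex (Λ.src ζ))) = 0 := by
        rw [← hcompress, ← hz]
        simp only [map_mul, hπa, zero_mul, mul_zero]
      exact hπv (d b) (Finsupp.mem_support_iff.mp hb) (Λ.src ζ) hπ0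
  intro x hx y hy hxy
  have hsub : x - y ∈ kpCore Λ R s t := Submodule.sub_mem _ hx hy
  have : x - y = 0 := hker _ hsub (by rw [map_sub, hxy, sub_self])
  exact sub_eq_zero.mp this

/-- a homomorphism out of `KP_R(Λ)` which is nonzero on all `r • s_v`
is injective on the core `KP_R(Λ)_0`. -/
theorem injective_on_core {k : ℕ} (hk : 0 < k) (Λ : KGraph k)
    (hΛ : Λ.FinitelyAligned) (R : Type) [CommRing R]
    (B : Type) [NonUnitalRing B] [Module R B] [SMulCommClass R B B]
    [IsScalarTower R B B] (s t : Λ.Path → B)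
    (hU : Λ.IsUniversalKP R B s t)
    (A : Type) [NonUnitalRing A] [Module R A] [SMulCommClass R A A]
    [IsScalarTower R A A] (π : B →ₙₐ[R] A)
    (hπv : ∀ r : R, r ≠ 0 → ∀ v, π (r • s (Λ.vertex v)) ≠ 0) :
    Set.InjOn π (kpCore Λ R s t : Set B) := by
  exact injective_on_core' hk Λ hΛ R B s t hU A π hπv
end

section
/- Let k be a positive integer and Λ a finitely aligned k-graph with boundary-path groupoid G_Λ. Let (λ,μ), (λ',μ') ∈ Λ *_s Λ, let G ⊆ s(λ)Λ and G' ⊆ s(λ')Λ, and set F := Λ^min(λ,λ') ∩ Λ^min(μ,μ'). Then Z(λ *_s μ \ G) ∩ Z(λ' *_s μ' \ G') = ⊔_{(γ,γ') ∈ F} Z(λγ *_s μ'γ' \ [Ext(γ;G) ∪ Ext(γ';G')]), and the sets on the right-hand side are pairwise disjoint. -/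
section Aux

variable {k : ℕ} {Λ : KGraph k}

-- ℕ∞ helpers
lemma enat_le_sub_iff {d : ℕ∞} {n m : ℕ} (h : (n:ℕ∞) ≤ d) :
    (m:ℕ∞) ≤ d - n ↔ ((n+m : ℕ) : ℕ∞) ≤ d := by
  induction d using ENat.recTopCoe with
  | top => simp
  | coe t =>
    have h' : n ≤ t := by exact_mod_cast h
    have e : (t:ℕ∞) - n = ((t - n : ℕ) : ℕ∞) := by exact_mod_cast rfl
    rw [e, Nat.cast_le, Nat.cast_le]
    omega

lemma enat_sub_cancel {A B : ℕ∞} {c : ℕ} (hA : (c:ℕ∞) ≤ A) (hB : (c:ℕ∞) ≤ B)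
    (h : A - c = B - c) : A = B := by
  have := tsub_add_cancel_of_le hA
  rw [← this, h, tsub_add_cancel_of_le hB]

/-- uniqueness of factorisations -/
lemma fact_unique {u1 v1 u2 v2 : Λ.Path} (h1 : Λ.src u1 = Λ.rng v1)
    (h2 : Λ.src u2 = Λ.rng v2) (hd : Λ.deg u1 = Λ.deg u2)
    (he : Λ.comp u1 v1 = Λ.comp u2 v2) : u1 = u2 ∧ v1 = v2 := by
  have hdv : Λ.deg v1 = Λ.deg v2 := by
    have e1 := Λ.deg_comp u1 v1 h1
    have e2 := Λ.deg_comp u2 v2 h2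
    rw [he, e2, hd] at e1
    exact (add_left_cancel e1.symm)
  obtain ⟨x, -, hun⟩ := Λ.factorisation (Λ.comp u1 v1) (Λ.deg u1) (Λ.deg v1)
    (Λ.deg_comp u1 v1 h1)
  have e1 : (u1, v1) = x := hun (u1, v1) ⟨h1, rfl, rfl, rfl⟩
  have e2 : (u2, v2) = x := hun (u2, v2) ⟨h2, hd.symm, hdv.symm, he.symm⟩
  have e3 : (u1, v1) = (u2, v2) := e1.trans e2.symm
  exact ⟨congrArg Prod.fst e3, congrArg Prod.snd e3⟩

lemma comp_left_cancel {p u v : Λ.Path} (hu : Λ.src p = Λ.rng u)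
    (hv : Λ.src p = Λ.rng v)
    (he : Λ.comp p u = Λ.comp p v) : u = v :=
  (fact_unique hu hv rfl he).2

lemma seg_factor {x : Λ.BoundaryPath} {p : Fin k → ℕ} {u v : Λ.Path}
    (hr : ∀ i, ((p + Λ.deg u + Λ.deg v) i : ℕ∞) ≤ x.deg i)
    (hsrc : Λ.src u = Λ.rng v)
    (h : x.seg p (p + Λ.deg u + Λ.deg v) = Λ.comp u v) :
    x.seg p (p + Λ.deg u) = u ∧
      x.seg (p + Λ.deg u) (p + Λ.deg u + Λ.deg v) = v := by
  have hpq : p ≤ p + Λ.deg u := fun i => by simp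
  have hqr : p + Λ.deg u ≤ p + Λ.deg u + Λ.deg v := fun i => by simp
  have hd1 : Λ.deg (x.seg p (p + Λ.deg u)) = Λ.deg u := by
    rw [x.deg_seg p (p + Λ.deg u) hpq
      (fun i => le_trans (by apply Nat.cast_le.mpr; simp) (hr i))]
    funext i; simp
  have hrq : ∀ i, (((p + Λ.deg u) i : ℕ) : ℕ∞) ≤ x.deg i := by
    intro i
    refine le_trans ?_ (hr i)
    apply Nat.cast_le.mpr; simp
  have hc := x.comp_seg p (p + Λ.deg u) (p + Λ.deg u + Λ.deg v) hpq hqr hr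
  have hs := x.src_seg p (p + Λ.deg u) (p + Λ.deg u + Λ.deg v) hpq hqr hr
  rw [h] at hc
  exact fact_unique hs hsrc hd1 hc

/-- the shift `σⁿ x` of a boundary path, constructed explicitly -/
def shiftBP (x : Λ.BoundaryPath) (n : Fin k → ℕ)
    (h : ∀ i, (n i : ℕ∞) ≤ x.deg i) : Λ.BoundaryPath where
  deg i := x.deg i - n i
  seg p q := x.seg (n + p) (n + q)
  deg_seg p q hpq hq := by
    have hq' : ∀ i, (((n + q) i : ℕ) : ℕ∞) ≤ x.deg i := by
      intro i
      have := (enat_le_sub_iff (h i)).mp (hq i)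
      simpa using this
    rw [x.deg_seg (n+p) (n+q) (fun i => by simpa using hpq i) hq']
    funext i; simp; omega
  seg_self p hp := by
    apply x.seg_self
    intro i
    have := (enat_le_sub_iff (h i)).mp (hp i)
    simpa using this
  src_seg p q r hpq hqr hr :=
    x.src_seg (n+p) (n+q) (n+r) (fun i => by simpa using hpq i)
      (fun i => by simpa using hqr i)
      (fun i => by simpa using (enat_le_sub_iff (h i)).mp (hr i))
  comp_seg p q r hpq hqr hr :=
    x.comp_seg (n+p) (n+q) (n+r) (fun i => by simpa using hpq i)
      (fun i => by simpa using hqr i)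
      (fun i => by simpa using (enat_le_sub_iff (h i)).mp (hr i))
  boundary m hm E hE := by
    have hm' : ∀ i, (((n + m) i : ℕ) : ℕ∞) ≤ x.deg i := by
      intro i; simpa using (enat_le_sub_iff (h i)).mp (hm i)
    obtain ⟨p, hpE, hd, hseg⟩ := x.boundary (n + m) hm' E hE
    refine ⟨p, hpE, fun i => ?_, ?_⟩
    · rw [enat_le_sub_iff (h i)]
      have := hd i
      simp only [Pi.add_apply] at this ⊢
      convert this using 2
      omega
    · have e : n + (m + Λ.deg p) = n + m + Λ.deg p := by funext i; simp; omega
      show x.seg (n + m) (n + (m + Λ.deg p)) = p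
      rw [e, hseg]

lemma isShift_shiftBP (x : Λ.BoundaryPath) (n : Fin k → ℕ)
    (h : ∀ i, (n i : ℕ∞) ≤ x.deg i) : Λ.IsShift n x (shiftBP x n h) :=
  ⟨h, fun _ => rfl, fun _ _ _ _ => rfl⟩

/-- `x` has `p` as an initial segment. -/
def HasPrefix (x : Λ.BoundaryPath) (p : Λ.Path) : Prop :=
  (∀ i, (Λ.deg p i : ℕ∞) ≤ x.deg i) ∧ x.seg 0 (Λ.deg p) = p

/-- the shifts `σᴾ x` and `σ^Q y` agree -/
def SMatch (x y : Λ.BoundaryPath) (P Q : Fin k → ℕ) : Prop :=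
  (∀ i, (P i:ℕ∞) ≤ x.deg i) ∧ (∀ i, (Q i:ℕ∞) ≤ y.deg i) ∧
  (∀ i, x.deg i - P i = y.deg i - Q i) ∧
  ∀ r s : Fin k → ℕ, r ≤ s → (∀ i, ((P+s) i:ℕ∞) ≤ x.deg i) →
    x.seg (P+r) (P+s) = y.seg (Q+r) (Q+s)

lemma mem_ZC_iff {x : Λ.BoundaryPath} {p : Λ.Path} :
    x ∈ Λ.ZC p ↔ HasPrefix x p := by
  constructor
  · rintro ⟨z, ⟨h1, -, -⟩, h2⟩
    exact ⟨h1, h2⟩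
  · rintro ⟨h1, h2⟩
    exact ⟨shiftBP x (Λ.deg p) h1, ⟨isShift_shiftBP x (Λ.deg p) h1, h2⟩⟩

lemma mem_ZP_iff {p q : Λ.Path}
    {a : Λ.BoundaryPath × (Fin k → ℤ) × Λ.BoundaryPath} :
    a ∈ Λ.ZP p q ↔
      (a.2.1 = fun i => (Λ.deg p i : ℤ) - Λ.deg q i) ∧
      HasPrefix a.1 p ∧ HasPrefix a.2.2 q ∧
      SMatch a.1 a.2.2 (Λ.deg p) (Λ.deg q) := by
  constructor
  · rintro ⟨hm, hx, hy, z, ⟨hp1, hp2, hp3⟩, ⟨hq1, hq2, hq3⟩⟩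
    refine ⟨hm, mem_ZC_iff.mp hx, mem_ZC_iff.mp hy, hp1, hq1,
      fun i => by rw [← hp2 i, ← hq2 i], fun r s hrs hs => ?_⟩
    have hsz : ∀ i, (s i : ℕ∞) ≤ z.deg i := by
      intro i
      rw [hp2 i, enat_le_sub_iff (hp1 i)]
      simpa using hs i
    rw [← hp3 r s hrs hsz, ← hq3 r s hrs hsz]
  · rintro ⟨hm, hx, hy, h1, h2, h3, h4⟩
    refine ⟨hm, mem_ZC_iff.mpr hx, mem_ZC_iff.mpr hy,
      shiftBP a.1 (Λ.deg p) h1, isShift_shiftBP a.1 (Λ.deg p) h1,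
      h2, fun i => by rw [← h3 i]; rfl, fun r s hrs hs => ?_⟩
    have hs' : ∀ i, (((Λ.deg p + s) i : ℕ):ℕ∞) ≤ a.1.deg i := by
      intro i
      have := hs i
      change (s i : ℕ∞) ≤ a.1.deg i - Λ.deg p i at this
      simpa using (enat_le_sub_iff (h1 i)).mp this
    exact h4 r s hrs hs'

lemma enat_top_sub (c : ℕ) : (⊤ : ℕ∞) - (c:ℕ∞) = ⊤ := by
  simp

lemma enat_transfer {A B : ℕ∞} {P Q s : ℕ} (h1 : (P:ℕ∞) ≤ A) (h2 : (Q:ℕ∞) ≤ B)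
    (h3 : A - P = B - Q) (h : (Q:ℕ∞) + s ≤ B) : (P:ℕ∞) + s ≤ A := by
  induction A using ENat.recTopCoe with
  | top => exact le_top
  | coe a =>
    induction B using ENat.recTopCoe with
    | top =>
      exfalso
      have e1 : (a:ℕ∞) - P = ((a - P : ℕ) : ℕ∞) := by exact_mod_cast rfl
      have e2 : (⊤ : ℕ∞) - Q = ⊤ := enat_top_sub _
      rw [e1, e2] at h3
      exact (ENat.coe_ne_top _) h3
    | coe b =>
      have h1' : P ≤ a := by exact_mod_cast h1
      have h2' : Q ≤ b := by exact_mod_cast h2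
      have h' : Q + s ≤ b := by exact_mod_cast h
      have h3' : a - P = b - Q := by
        have e1 : (a:ℕ∞) - P = ((a - P : ℕ) : ℕ∞) := by exact_mod_cast rfl
        have e2 : (b:ℕ∞) - Q = ((b - Q : ℕ) : ℕ∞) := by exact_mod_cast rfl
        rw [e1, e2] at h3
        exact_mod_cast h3
      have : P + s ≤ a := by omega
      exact_mod_cast this

lemma SMatch_symm {x y : Λ.BoundaryPath} {P Q : Fin k → ℕ}
    (h : SMatch x y P Q) : SMatch y x Q P := by
  obtain ⟨h1, h2, h3, h4⟩ := h
  refine ⟨h2, h1, fun i => (h3 i).symm, fun r s hrs hs => ?_⟩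
  have hs' : ∀ i, ((P + s) i : ℕ∞) ≤ x.deg i := by
    intro i
    have := hs i
    simp only [Pi.add_apply] at this ⊢
    push_cast at this ⊢
    exact enat_transfer (h1 i) (h2 i) (h3 i) this
  exact (h4 r s hrs hs').symm

lemma SMatch_shift {x y : Λ.BoundaryPath} {P Q : Fin k → ℕ}
    (h : SMatch x y P Q) (u : Fin k → ℕ)
    (hu : ∀ i, ((P + u) i : ℕ∞) ≤ x.deg i) : SMatch x y (P + u) (Q + u) := by
  obtain ⟨h1, h2, h3, h4⟩ := h
  have hu' : ∀ i, ((Q + u) i : ℕ∞) ≤ y.deg i := by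
    intro i
    have := hu i
    simp only [Pi.add_apply] at this ⊢
    push_cast at this ⊢
    exact enat_transfer (h2 i) (h1 i) ((h3 i).symm ▸ rfl) this
  refine ⟨hu, hu', fun i => ?_, fun r s hrs hs => ?_⟩
  · simp only [Pi.add_apply]
    push_cast
    rw [← tsub_tsub, ← tsub_tsub, h3 i]
  · have e1 : P + u + r = P + (u + r) := by funext i; simp; omega
    have e2 : P + u + s = P + (u + s) := by funext i; simp; omega
    have e3 : Q + u + r = Q + (u + r) := by funext i; simp; omega
    have e4 : Q + u + s = Q + (u + s) := by funext i; simp; omega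
    rw [e1, e2, e3, e4]
    refine h4 (u + r) (u + s) (fun i => by simpa using hrs i) ?_
    intro i
    rw [← e2]
    exact hs i

/-- transfer of a continuation segment across a shift match -/
lemma SMatch_seg {x y : Λ.BoundaryPath} {P Q : Fin k → ℕ}
    (h : SMatch x y P Q) (t : Fin k → ℕ)
    (ht : ∀ i, ((P + t) i : ℕ∞) ≤ x.deg i) :
    (∀ i, ((Q + t) i : ℕ∞) ≤ y.deg i) ∧ y.seg Q (Q + t) = x.seg P (P + t) := by
  obtain ⟨h1, h2, h3, h4⟩ := h
  have hQ : ∀ i, ((Q + t) i : ℕ∞) ≤ y.deg i := by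
    intro i
    have := ht i
    simp only [Pi.add_apply] at this ⊢
    push_cast at this ⊢
    exact enat_transfer (h2 i) (h1 i) ((h3 i).symm) this
  have := h4 0 t (fun i => by simp) (by simpa using ht)
  simp only [add_zero] at this
  exact ⟨hQ, this.symm⟩

lemma hasPrefix_comp_left {x : Λ.BoundaryPath} {u v : Λ.Path}
    (hsrc : Λ.src u = Λ.rng v) (h : HasPrefix x (Λ.comp u v)) :
    HasPrefix x u ∧ x.seg (Λ.deg u) (Λ.deg u + Λ.deg v) = v ∧
      (∀ i, ((Λ.deg u + Λ.deg v) i : ℕ∞) ≤ x.deg i) := by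
  obtain ⟨h1, h2⟩ := h
  rw [Λ.deg_comp u v hsrc] at h1 h2
  have h1' : ∀ i, (((0 + Λ.deg u + Λ.deg v) i : ℕ) : ℕ∞) ≤ x.deg i := by
    intro i; simpa using h1 i
  have h2' : x.seg 0 (0 + Λ.deg u + Λ.deg v) = Λ.comp u v := by
    rw [show (0 : Fin k → ℕ) + Λ.deg u + Λ.deg v = Λ.deg u + Λ.deg v by simp]
    exact h2
  obtain ⟨e1, e2⟩ := seg_factor h1' hsrc h2'
  rw [show (0 : Fin k → ℕ) + Λ.deg u = Λ.deg u by simp] at e1 e2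
  refine ⟨⟨fun i => ?_, e1⟩, e2, h1⟩
  refine le_trans ?_ (h1 i)
  exact Nat.cast_le.mpr (by simp only [Pi.add_apply]; exact Nat.le_add_right _ _)

lemma hasPrefix_comp {x : Λ.BoundaryPath} {u v : Λ.Path}
    (hu : HasPrefix x u) (hd : ∀ i, ((Λ.deg u + Λ.deg v) i : ℕ∞) ≤ x.deg i)
    (hv : x.seg (Λ.deg u) (Λ.deg u + Λ.deg v) = v) :
    HasPrefix x (Λ.comp u v) := by
  have hle1 : (0 : Fin k → ℕ) ≤ Λ.deg u := fun i => by simp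
  have hle2 : Λ.deg u ≤ Λ.deg u + Λ.deg v := fun i => by simp
  have hsrc : Λ.src u = Λ.rng v := by
    rw [← hu.2, ← hv]
    exact x.src_seg 0 (Λ.deg u) (Λ.deg u + Λ.deg v) hle1 hle2 hd
  constructor
  · intro i
    rw [Λ.deg_comp u v hsrc]
    exact hd i
  · rw [Λ.deg_comp u v hsrc, ← x.comp_seg 0 (Λ.deg u) (Λ.deg u + Λ.deg v) hle1 hle2 hd,
      hu.2, hv]

/-- prefixes of a fixed degree are unique -/
lemma hasPrefix_unique {x : Λ.BoundaryPath} {u v : Λ.Path}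
    (hu : HasPrefix x u) (hv : HasPrefix x v) (h : Λ.deg u = Λ.deg v) : u = v := by
  rw [← hu.2, ← hv.2, h]

lemma dom_mono {x : Λ.BoundaryPath} {A B : Fin k → ℕ} (hAB : A ≤ B)
    (hB : ∀ i, (B i : ℕ∞) ≤ x.deg i) : ∀ i, (A i : ℕ∞) ≤ x.deg i :=
  fun i => le_trans (Nat.cast_le.mpr (hAB i)) (hB i)

lemma enat_sub_eq_of_sub_add {A B : ℕ∞} {P Q u : ℕ}
    (hA : ((P+u : ℕ):ℕ∞) ≤ A) (hB : ((Q+u : ℕ):ℕ∞) ≤ B)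
    (h : A - ((P+u : ℕ):ℕ∞) = B - ((Q+u : ℕ):ℕ∞)) : A - P = B - Q := by
  induction A using ENat.recTopCoe with
  | top =>
    induction B using ENat.recTopCoe with
    | top => rfl
    | coe b =>
      exfalso
      have e2 : (b:ℕ∞) - (↑(Q+u)) = ((b - (Q+u) : ℕ) : ℕ∞) := by exact_mod_cast rfl
      have e1 : (⊤ : ℕ∞) - (↑(P+u)) = ⊤ := enat_top_sub _
      rw [e1, e2] at h
      exact (ENat.coe_ne_top _) h.symm
  | coe a =>
    induction B using ENat.recTopCoe with
    | top =>
      exfalso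
      have e1 : (a:ℕ∞) - (↑(P+u)) = ((a - (P+u) : ℕ) : ℕ∞) := by exact_mod_cast rfl
      have e2 : (⊤ : ℕ∞) - (↑(Q+u)) = ⊤ := enat_top_sub _
      rw [e1, e2] at h
      exact (ENat.coe_ne_top _) h
    | coe b =>
      have hA' : P + u ≤ a := by exact_mod_cast hA
      have hB' : Q + u ≤ b := by exact_mod_cast hB
      have h' : a - (P+u) = b - (Q+u) := by
        have e1 : (a:ℕ∞) - (↑(P+u)) = ((a - (P+u) : ℕ) : ℕ∞) := by exact_mod_cast rfl
        have e2 : (b:ℕ∞) - (↑(Q+u)) = ((b - (Q+u) : ℕ) : ℕ∞) := by exact_mod_cast rfl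
        rw [e1, e2] at h
        exact_mod_cast h
      have e1 : (a:ℕ∞) - P = ((a - P : ℕ) : ℕ∞) := by exact_mod_cast rfl
      have e2 : (b:ℕ∞) - Q = ((b - Q : ℕ) : ℕ∞) := by exact_mod_cast rfl
      rw [e1, e2]
      congr 1
      omega

lemma SMatch_unshift {x y : Λ.BoundaryPath} {P Q u : Fin k → ℕ} {w : Λ.Path}
    (h : SMatch x y (P + u) (Q + u))
    (hx : x.seg P (P + u) = w) (hy : y.seg Q (Q + u) = w) :
    SMatch x y P Q := by
  obtain ⟨h1, h2, h3, h4⟩ := h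
  have hP : ∀ i, (P i : ℕ∞) ≤ x.deg i := dom_mono (fun i => by simp) h1
  have hQ : ∀ i, (Q i : ℕ∞) ≤ y.deg i := dom_mono (fun i => by simp) h2
  have hdeg : ∀ i, x.deg i - P i = y.deg i - Q i := by
    intro i
    refine enat_sub_eq_of_sub_add (u := u i) ?_ ?_ ?_
    · exact_mod_cast h1 i
    · exact_mod_cast h2 i
    · have e1 := h3 i
      simp only [Pi.add_apply] at e1
      convert e1 using 2 <;> push_cast <;> ring
  have key : ∀ t : Fin k → ℕ, (∀ i, ((P + t) i : ℕ∞) ≤ x.deg i) →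
      (∀ i, ((Q + t) i : ℕ∞) ≤ y.deg i) ∧ x.seg P (P + t) = y.seg Q (Q + t) := by
    intro t ht
    have hQt : ∀ i, ((Q + t) i : ℕ∞) ≤ y.deg i := by
      intro i
      have := ht i
      simp only [Pi.add_apply] at this ⊢
      push_cast at this ⊢
      exact enat_transfer (hQ i) (hP i) ((hdeg i).symm) this
    refine ⟨hQt, ?_⟩
    set W : Fin k → ℕ := t ⊔ u with hW
    have htW : t ≤ W := le_sup_left
    have huW : u ≤ W := le_sup_right
    have hxW : ∀ i, ((P + W) i : ℕ∞) ≤ x.deg i := by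
      intro i
      simp only [Pi.add_apply, hW, Pi.sup_apply]
      rcases le_total (t i) (u i) with hc | hc
      · rw [sup_eq_right.mpr hc]
        simpa using h1 i
      · rw [sup_eq_left.mpr hc]
        simpa using ht i
    have hyW : ∀ i, ((Q + W) i : ℕ∞) ≤ y.deg i := by
      intro i
      have := hxW i
      simp only [Pi.add_apply] at this ⊢
      push_cast at this ⊢
      exact enat_transfer (hQ i) (hP i) ((hdeg i).symm) this
    have ePu : P + W = P + u + (W - u) := by
      funext i
      simp only [Pi.add_apply, Pi.sub_apply]
      have hle : u i ≤ W i := huW i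
      omega
    have eQu : Q + W = Q + u + (W - u) := by
      funext i
      simp only [Pi.add_apply, Pi.sub_apply]
      have hle : u i ≤ W i := huW i
      omega
    have hmid : x.seg (P + u) (P + W) = y.seg (Q + u) (Q + W) := by
      have hdom : ∀ i, ((P + u + (W - u)) i : ℕ∞) ≤ x.deg i := by
        rw [← ePu]
        exact hxW
      have hcal := h4 0 (W - u) (fun i => by simp) hdom
      simp only [add_zero] at hcal
      rw [ePu, eQu]
      exact hcal
    have hbig : x.seg P (P + W) = y.seg Q (Q + W) := by
      have c1 := x.comp_seg P (P + u) (P + W) (fun i => by simp)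
        (fun i => by simpa using add_le_add_left (huW i) (P i)) hxW
      have c2 := y.comp_seg Q (Q + u) (Q + W) (fun i => by simp)
        (fun i => by simpa using add_le_add_left (huW i) (Q i)) hyW
      rw [← c1, ← c2, hx, hy, hmid]
    -- now factor hbig at P + t
    have hPt : P + t ≤ P + W := fun i => by simpa using htW i
    have hQt' : Q + t ≤ Q + W := fun i => by simpa using htW i
    have c1 := x.comp_seg P (P + t) (P + W) (fun i => by simp) hPt hxW
    have c2 := y.comp_seg Q (Q + t) (Q + W) (fun i => by simp) hQt' hyW
    have hcomp : Λ.comp (x.seg P (P + t)) (x.seg (P + t) (P + W)) =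
        Λ.comp (y.seg Q (Q + t)) (y.seg (Q + t) (Q + W)) := by
      rw [c1, c2, hbig]
    have hd : Λ.deg (x.seg P (P + t)) = Λ.deg (y.seg Q (Q + t)) := by
      rw [x.deg_seg P (P + t) (fun i => by simp) ht,
        y.deg_seg Q (Q + t) (fun i => by simp) hQt]
      funext i; simp
    exact (fact_unique
      (x.src_seg P (P + t) (P + W) (fun i => by simp) hPt hxW)
      (y.src_seg Q (Q + t) (Q + W) (fun i => by simp) hQt' hyW)
      hd hcomp).1
  refine ⟨hP, hQ, hdeg, fun r s hrs hs => ?_⟩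
  obtain ⟨hQs, es⟩ := key s hs
  have hrs' : P + r ≤ P + s := fun i => by simpa using hrs i
  have hrs'' : Q + r ≤ Q + s := fun i => by simpa using hrs i
  obtain ⟨hQr, er⟩ := key r (dom_mono hrs' hs)
  have c1 := x.comp_seg P (P + r) (P + s) (fun i => by simp) hrs' hs
  have c2 := y.comp_seg Q (Q + r) (Q + s) (fun i => by simp) hrs'' hQs
  have hcomp : Λ.comp (x.seg P (P + r)) (x.seg (P + r) (P + s)) =
      Λ.comp (y.seg Q (Q + r)) (y.seg (Q + r) (Q + s)) := by
    rw [c1, c2, es]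
  have hd : Λ.deg (x.seg P (P + r)) = Λ.deg (y.seg Q (Q + r)) := by
    rw [x.deg_seg P (P + r) (fun i => by simp) (dom_mono hrs' hs),
      y.deg_seg Q (Q + r) (fun i => by simp) hQr]
    funext i; simp
  exact (fact_unique
    (x.src_seg P (P + r) (P + s) (fun i => by simp) hrs' hs)
    (y.src_seg Q (Q + r) (Q + s) (fun i => by simp) hrs'' hQs)
    hd hcomp).2

lemma mem_ZPD_iff {p q : Λ.Path} {G : Set Λ.Path}
    {w : Λ.BoundaryPath × (Fin k → ℤ) × Λ.BoundaryPath} :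
    w ∈ Λ.ZPD p q G ↔ w ∈ Λ.ZP p q ∧
      ∀ ν ∈ G, w ∉ Λ.ZP (Λ.comp p ν) (Λ.comp q ν) := by
  simp only [KGraph.ZPD, Set.mem_diff, Set.mem_iUnion, not_exists, exists_prop]
  tauto

lemma mem_extSet_iff {p ν : Λ.Path} {G : Set Λ.Path} :
    ν ∈ Λ.extSet p G ↔ ∃ μ ∈ G, ∃ t, (ν, t) ∈ Λ.minPairs p μ := by
  simp [KGraph.extSet]

lemma ZP_swap {p q : Λ.Path} {w : Λ.BoundaryPath × (Fin k → ℤ) × Λ.BoundaryPath} :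
    w ∈ Λ.ZP p q ↔ (w.2.2, -w.2.1, w.1) ∈ Λ.ZP q p := by
  rw [mem_ZP_iff, mem_ZP_iff]
  constructor
  · rintro ⟨hm, hx, hy, hS⟩
    refine ⟨?_, hy, hx, SMatch_symm hS⟩
    rw [hm]
    funext i
    simp only [Pi.neg_apply]
    ring
  · rintro ⟨hm, hy, hx, hS⟩
    refine ⟨?_, hx, hy, SMatch_symm hS⟩
    have hm' : (-w.2.1) = fun i => (Λ.deg q i : ℤ) - (Λ.deg p i) := hm
    funext i
    have h := congrFun hm' i
    simp only [Pi.neg_apply] at h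
    omega

/-- membership in `ZP (a·g) (b'·g')` implies membership in `ZP a b` and `ZP a' b'`. -/
lemma base_of_ext {a b a' b' g g' : Λ.Path}
    {w : Λ.BoundaryPath × (Fin k → ℤ) × Λ.BoundaryPath}
    (hab : Λ.src a = Λ.src b) (hab' : Λ.src a' = Λ.src b')
    (hg1 : (g, g') ∈ Λ.minPairs a a') (hg2 : (g, g') ∈ Λ.minPairs b b')
    (hw : w ∈ Λ.ZP (Λ.comp a g) (Λ.comp b' g')) :
    w ∈ Λ.ZP a b ∧ w ∈ Λ.ZP a' b' := by
  obtain ⟨hra, hra', hcg, hdg⟩ := hg1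
  obtain ⟨hrb, hrb', hcg2, hdg2⟩ := hg2
  rw [mem_ZP_iff] at hw
  obtain ⟨hm, hxag, hyb'g', hS⟩ := hw
  -- degree bookkeeping
  have hda : Λ.deg (Λ.comp a g) = Λ.deg a + Λ.deg g := Λ.deg_comp a g hra
  have hda' : Λ.deg (Λ.comp a' g') = Λ.deg a' + Λ.deg g' := Λ.deg_comp a' g' hra'
  have hdb : Λ.deg (Λ.comp b g) = Λ.deg b + Λ.deg g := Λ.deg_comp b g hrb
  have hdb' : Λ.deg (Λ.comp b' g') = Λ.deg b' + Λ.deg g' := Λ.deg_comp b' g' hrb'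
  have hdaa : Λ.deg a + Λ.deg g = Λ.deg a' + Λ.deg g' := by
    rw [← hda, ← hda', hcg]
  have hdbb : Λ.deg b + Λ.deg g = Λ.deg b' + Λ.deg g' := by
    rw [← hdb, ← hdb', hcg2]
  -- x-side prefixes
  obtain ⟨hxa, hxg, hxdom⟩ := hasPrefix_comp_left hra hxag
  have hxag' : HasPrefix w.1 (Λ.comp a' g') := by rw [← hcg]; exact hxag
  obtain ⟨hxa', hxg', hxdom'⟩ := hasPrefix_comp_left hra' hxag'
  -- y-side prefixes
  obtain ⟨hyb', hyg', hydom'⟩ := hasPrefix_comp_left hrb' hyb'g'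
  have hybg : HasPrefix w.2.2 (Λ.comp b g) := by rw [hcg2]; exact hyb'g'
  obtain ⟨hyb, hyg, hydom⟩ := hasPrefix_comp_left hrb hybg
  -- shift matches
  have hS1 : SMatch w.1 w.2.2 (Λ.deg a + Λ.deg g) (Λ.deg b + Λ.deg g) := by
    have : Λ.deg (Λ.comp b' g') = Λ.deg b + Λ.deg g := by rw [hdb', ← hdbb]
    rw [hda, this] at hS
    exact hS
  have hS2 : SMatch w.1 w.2.2 (Λ.deg a' + Λ.deg g') (Λ.deg b' + Λ.deg g') := by
    have e1 : Λ.deg (Λ.comp a g) = Λ.deg a' + Λ.deg g' := by rw [hda, hdaa]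
    have e2 : Λ.deg (Λ.comp b' g') = Λ.deg b' + Λ.deg g' := hdb'
    rw [e1, e2] at hS
    exact hS
  constructor
  · rw [mem_ZP_iff]
    refine ⟨?_, hxa, hyb, SMatch_unshift hS1 hxg hyg⟩
    rw [hm]
    funext i
    have e1 := congrFun hda i
    have e2 := congrFun hdb' i
    have e3 := congrFun hdbb i
    simp only [Pi.add_apply] at e1 e2 e3
    simp only [e1, e2]
    push_cast
    omega
  · rw [mem_ZP_iff]
    refine ⟨?_, hxa', hyb', SMatch_unshift hS2 hxg' hyg'⟩
    rw [hm]
    funext i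
    have e1 := congrFun hda i
    have e2 := congrFun hdb' i
    have e3 := congrFun hdaa i
    simp only [Pi.add_apply] at e1 e2 e3
    simp only [e1, e2]
    push_cast
    omega

lemma key_ext {a b a' b' g g' μ : Λ.Path}
    {w : Λ.BoundaryPath × (Fin k → ℤ) × Λ.BoundaryPath}
    (hab : Λ.src a = Λ.src b) (hab' : Λ.src a' = Λ.src b')
    (hg1 : (g, g') ∈ Λ.minPairs a a') (hg2 : (g, g') ∈ Λ.minPairs b b')
    (hμ : Λ.rng μ = Λ.src a)
    (hw : w ∈ Λ.ZP (Λ.comp a g) (Λ.comp b' g')) :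
    w ∈ Λ.ZP (Λ.comp a μ) (Λ.comp b μ) ↔
      ∃ ν t, (ν, t) ∈ Λ.minPairs g μ ∧
        w ∈ Λ.ZP (Λ.comp (Λ.comp a g) ν) (Λ.comp (Λ.comp b' g') ν) := by
  obtain ⟨hra, hra', hcg, hdg⟩ := hg1
  obtain ⟨hrb, hrb', hcg2, hdg2⟩ := hg2
  have hbase := base_of_ext hab hab' ⟨hra, hra', hcg, hdg⟩ ⟨hrb, hrb', hcg2, hdg2⟩ hw
  have hzab := hbase.1
  rw [mem_ZP_iff] at hzab hw
  obtain ⟨hm, hxag, hyb'g', hS⟩ := hw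
  obtain ⟨hmab, hxa0, hyb, hSab⟩ := hzab
  obtain ⟨hxa, hxg, hxdom⟩ := hasPrefix_comp_left hra hxag
  have hda : Λ.deg (Λ.comp a g) = Λ.deg a + Λ.deg g := Λ.deg_comp a g hra
  have hdb : Λ.deg (Λ.comp b g) = Λ.deg b + Λ.deg g := Λ.deg_comp b g hrb
  have hdb' : Λ.deg (Λ.comp b' g') = Λ.deg b' + Λ.deg g' := Λ.deg_comp b' g' hrb'
  have hdbb : Λ.deg b + Λ.deg g = Λ.deg b' + Λ.deg g' := by
    rw [← hdb, ← hdb', hcg2]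
  have hdB : Λ.deg (Λ.comp b' g') = Λ.deg b + Λ.deg g := by rw [hdb', ← hdbb]
  have hsrcg : Λ.src g = Λ.src g' := by
    have h1 := Λ.src_comp a g hra
    have h2 := Λ.src_comp a' g' hra'
    rw [hcg, h2] at h1
    exact h1.symm
  have haμ : Λ.src a = Λ.rng μ := hμ.symm
  have hbμ : Λ.src b = Λ.rng μ := by rw [← hab]; exact haμ
  constructor
  · -- forward
    intro h2
    rw [mem_ZP_iff] at h2
    obtain ⟨hm2, hxaμ, hybμ, hS2⟩ := h2
    obtain ⟨-, hxμ, hxdomμ⟩ := hasPrefix_comp_left haμ hxaμ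
    set n' : Fin k → ℕ := Λ.deg g ⊔ Λ.deg μ with hn'
    have hgn : Λ.deg g ≤ n' := le_sup_left
    have hμn : Λ.deg μ ≤ n' := le_sup_right
    have domx : ∀ i, ((Λ.deg a + n') i : ℕ∞) ≤ w.1.deg i := by
      intro i
      simp only [Pi.add_apply, hn', Pi.sup_apply]
      rcases le_total (Λ.deg g i) (Λ.deg μ i) with hc | hc
      · rw [sup_eq_right.mpr hc]
        simpa using hxdomμ i
      · rw [sup_eq_left.mpr hc]
        simpa using hxdom i
    have haag : Λ.deg a ≤ Λ.deg a + Λ.deg g := fun i => by simp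
    have haaμ : Λ.deg a ≤ Λ.deg a + Λ.deg μ := fun i => by simp
    have hagn : Λ.deg a + Λ.deg g ≤ Λ.deg a + n' := fun i => by simpa using hgn i
    have haμn : Λ.deg a + Λ.deg μ ≤ Λ.deg a + n' := fun i => by simpa using hμn i
    set ν : Λ.Path := w.1.seg (Λ.deg a + Λ.deg g) (Λ.deg a + n') with hνdef
    set tt : Λ.Path := w.1.seg (Λ.deg a + Λ.deg μ) (Λ.deg a + n') with httdef
    have hsrcν : Λ.src g = Λ.rng ν := by
      have h := w.1.src_seg (Λ.deg a) (Λ.deg a + Λ.deg g) (Λ.deg a + n') haag hagn domx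
      rw [hxg] at h
      exact h
    have hsrct : Λ.src μ = Λ.rng tt := by
      have h := w.1.src_seg (Λ.deg a) (Λ.deg a + Λ.deg μ) (Λ.deg a + n') haaμ haμn domx
      rw [hxμ] at h
      exact h
    have hcompν : Λ.comp g ν = w.1.seg (Λ.deg a) (Λ.deg a + n') := by
      have h := w.1.comp_seg (Λ.deg a) (Λ.deg a + Λ.deg g) (Λ.deg a + n') haag hagn domx
      rw [hxg] at h
      exact h
    have hcompt : Λ.comp μ tt = w.1.seg (Λ.deg a) (Λ.deg a + n') := by
      have h := w.1.comp_seg (Λ.deg a) (Λ.deg a + Λ.deg μ) (Λ.deg a + n') haaμ haμn domx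
      rw [hxμ] at h
      exact h
    have hdegν : Λ.deg ν = (Λ.deg a + n') - (Λ.deg a + Λ.deg g) :=
      w.1.deg_seg _ _ hagn domx
    have hdmin : Λ.deg (Λ.comp g ν) = Λ.deg g ⊔ Λ.deg μ := by
      rw [Λ.deg_comp g ν hsrcν, hdegν]
      funext i
      simp only [Pi.add_apply, Pi.sup_apply, Pi.sub_apply, hn']
      rcases le_total (Λ.deg g i) (Λ.deg μ i) with hc | hc
      · rw [sup_eq_right.mpr hc]
        omega
      · rw [sup_eq_left.mpr hc]
        omega
    have eAν : Λ.deg (Λ.comp a g) + Λ.deg ν = Λ.deg a + n' := by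
      rw [hda, hdegν]
      funext i
      simp only [Pi.add_apply, Pi.sub_apply]
      have hle : Λ.deg g i ≤ n' i := hgn i
      omega
    have domAν : ∀ i, ((Λ.deg (Λ.comp a g) + Λ.deg ν) i : ℕ∞) ≤ w.1.deg i := by
      intro i
      rw [eAν]
      exact domx i
    have segx : w.1.seg (Λ.deg (Λ.comp a g)) (Λ.deg (Λ.comp a g) + Λ.deg ν) = ν := by
      rw [eAν, hda]
    have hxPre : HasPrefix w.1 (Λ.comp (Λ.comp a g) ν) :=
      hasPrefix_comp hxag domAν segx
    have hSc := SMatch_seg hS (Λ.deg ν) domAν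
    have hyPre : HasPrefix w.2.2 (Λ.comp (Λ.comp b' g') ν) :=
      hasPrefix_comp hyb'g' hSc.1 (hSc.2.trans segx)
    have hsrcAν : Λ.src (Λ.comp a g) = Λ.rng ν := by
      rw [Λ.src_comp a g hra]
      exact hsrcν
    have hsrcBν : Λ.src (Λ.comp b' g') = Λ.rng ν := by
      rw [Λ.src_comp b' g' hrb', ← hsrcg]
      exact hsrcν
    have hSfin : SMatch w.1 w.2.2 (Λ.deg (Λ.comp (Λ.comp a g) ν))
        (Λ.deg (Λ.comp (Λ.comp b' g') ν)) := by
      rw [Λ.deg_comp _ ν hsrcAν, Λ.deg_comp _ ν hsrcBν]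
      exact SMatch_shift hS (Λ.deg ν) domAν
    have hmfin : w.2.1 = fun i => (Λ.deg (Λ.comp (Λ.comp a g) ν) i : ℤ) -
        Λ.deg (Λ.comp (Λ.comp b' g') ν) i := by
      rw [hm]
      funext i
      have e1 := congrFun (Λ.deg_comp _ ν hsrcAν) i
      have e2 := congrFun (Λ.deg_comp _ ν hsrcBν) i
      simp only [Pi.add_apply] at e1 e2
      rw [e1, e2]
      push_cast
      ring
    exact ⟨ν, tt, ⟨hsrcν, hsrct, by rw [hcompν, hcompt], hdmin⟩,
      mem_ZP_iff.mpr ⟨hmfin, hxPre, hyPre, hSfin⟩⟩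
  · -- backward
    rintro ⟨ν, t, ⟨hgν, hμt, hgνμt, hdmin⟩, h2⟩
    rw [mem_ZP_iff] at h2
    obtain ⟨hm2, hx2, hy2, hS2⟩ := h2
    have ecomp : Λ.comp (Λ.comp a g) ν = Λ.comp (Λ.comp a μ) t := by
      rw [Λ.comp_assoc a g ν hra hgν, hgνμt, ← Λ.comp_assoc a μ t haμ hμt]
    have hx2' : HasPrefix w.1 (Λ.comp (Λ.comp a μ) t) := by
      rw [← ecomp]
      exact hx2
    have hsrcaμt : Λ.src (Λ.comp a μ) = Λ.rng t := by
      rw [Λ.src_comp a μ haμ]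
      exact hμt
    obtain ⟨hxaμ, hxt, hxdomμt⟩ := hasPrefix_comp_left hsrcaμt hx2'
    obtain ⟨hxa2, hxμ, hxdomaμ⟩ := hasPrefix_comp_left haμ hxaμ
    have hSc := SMatch_seg hSab (Λ.deg μ) hxdomaμ
    have hyPre : HasPrefix w.2.2 (Λ.comp b μ) :=
      hasPrefix_comp hyb hSc.1 (hSc.2.trans hxμ)
    have hSfin : SMatch w.1 w.2.2 (Λ.deg (Λ.comp a μ)) (Λ.deg (Λ.comp b μ)) := by
      rw [Λ.deg_comp a μ haμ, Λ.deg_comp b μ hbμ]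
      exact SMatch_shift hSab (Λ.deg μ) hxdomaμ
    have hmfin : w.2.1 = fun i => (Λ.deg (Λ.comp a μ) i : ℤ) -
        Λ.deg (Λ.comp b μ) i := by
      rw [hmab]
      funext i
      have e1 := congrFun (Λ.deg_comp a μ haμ) i
      have e2 := congrFun (Λ.deg_comp b μ hbμ) i
      simp only [Pi.add_apply] at e1 e2
      rw [e1, e2]
      push_cast
      ring
    exact mem_ZP_iff.mpr ⟨hmfin, hxaμ, hyPre, hSfin⟩

lemma key_ext' {a b a' b' g g' μ' : Λ.Path}
    {w : Λ.BoundaryPath × (Fin k → ℤ) × Λ.BoundaryPath}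
    (hab : Λ.src a = Λ.src b) (hab' : Λ.src a' = Λ.src b')
    (hg1 : (g, g') ∈ Λ.minPairs a a') (hg2 : (g, g') ∈ Λ.minPairs b b')
    (hμ' : Λ.rng μ' = Λ.src a')
    (hw : w ∈ Λ.ZP (Λ.comp a g) (Λ.comp b' g')) :
    w ∈ Λ.ZP (Λ.comp a' μ') (Λ.comp b' μ') ↔
      ∃ ν t, (ν, t) ∈ Λ.minPairs g' μ' ∧
        w ∈ Λ.ZP (Λ.comp (Λ.comp a g) ν) (Λ.comp (Λ.comp b' g') ν) := by
  obtain ⟨hra, hra', hcg, hdg⟩ := hg1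
  obtain ⟨hrb, hrb', hcg2, hdg2⟩ := hg2
  have hg1' : (g', g) ∈ Λ.minPairs b' b := by
    refine ⟨hrb', hrb, hcg2.symm, ?_⟩
    rw [← hcg2, hdg2, sup_comm]
  have hg2' : (g', g) ∈ Λ.minPairs a' a := by
    refine ⟨hra', hra, hcg.symm, ?_⟩
    rw [← hcg, hdg, sup_comm]
  have hμ'' : Λ.rng μ' = Λ.src b' := by rw [← hab']; exact hμ'
  have main := key_ext (w := (w.2.2, -w.2.1, w.1)) hab'.symm hab.symm hg1' hg2'
    hμ'' (ZP_swap.mp hw)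
  refine (ZP_swap.trans main).trans ?_
  exact exists_congr fun ν => exists_congr fun t => and_congr_right fun _ =>
    ZP_swap.symm

end Aux

/-- decomposition of the intersection of two basic sets of the
boundary-path groupoid as a disjoint union over
`F = Λ^min(a,a') ∩ Λ^min(b,b')`. -/
theorem zset_intersection {k : ℕ} (hk : 0 < k) (Λ : KGraph k)
    (hΛ : Λ.FinitelyAligned)
    (a b a' b' : Λ.Path) (hab : Λ.src a = Λ.src b) (hab' : Λ.src a' = Λ.src b')
    (G G' : Set Λ.Path) (hG : ∀ ν ∈ G, Λ.rng ν = Λ.src a)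
    (hG' : ∀ ν ∈ G', Λ.rng ν = Λ.src a') :
    (Λ.ZPD a b G ∩ Λ.ZPD a' b' G' =
      ⋃ x ∈ Λ.minPairs a a' ∩ Λ.minPairs b b',
        Λ.ZPD (Λ.comp a x.1) (Λ.comp b' x.2)
          (Λ.extSet x.1 G ∪ Λ.extSet x.2 G')) ∧
    ∀ x ∈ Λ.minPairs a a' ∩ Λ.minPairs b b',
      ∀ y ∈ Λ.minPairs a a' ∩ Λ.minPairs b b', x ≠ y →
        Λ.ZPD (Λ.comp a x.1) (Λ.comp b' x.2)
            (Λ.extSet x.1 G ∪ Λ.extSet x.2 G') ∩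
          Λ.ZPD (Λ.comp a y.1) (Λ.comp b' y.2)
            (Λ.extSet y.1 G ∪ Λ.extSet y.2 G') = ∅ := by
  constructor
  · ext w
    simp only [Set.mem_inter_iff, Set.mem_iUnion, exists_prop]
    constructor
    · rintro ⟨hA, hB⟩
      rw [mem_ZPD_iff] at hA hB
      obtain ⟨hA1, hA2⟩ := hA
      obtain ⟨hB1, hB2⟩ := hB
      have hA1' := hA1
      have hB1' := hB1
      rw [mem_ZP_iff] at hA1' hB1'
      obtain ⟨hm1, hxa, hyb, hS1⟩ := hA1'
      obtain ⟨hm2, hxa', hyb', hS2⟩ := hB1'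
      set n : Fin k → ℕ := Λ.deg a ⊔ Λ.deg a' with hn
      have han : Λ.deg a ≤ n := le_sup_left
      have han' : Λ.deg a' ≤ n := le_sup_right
      have hnx : ∀ i, (n i : ℕ∞) ≤ w.1.deg i := by
        intro i
        simp only [hn, Pi.sup_apply]
        rcases le_total (Λ.deg a i) (Λ.deg a' i) with hc | hc
        · rw [sup_eq_right.mpr hc]; exact hxa'.1 i
        · rw [sup_eq_left.mpr hc]; exact hxa.1 i
      have h0a : (0 : Fin k → ℕ) ≤ Λ.deg a := fun i => Nat.zero_le _
      have h0a' : (0 : Fin k → ℕ) ≤ Λ.deg a' := fun i => Nat.zero_le _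
      have h0n : (0 : Fin k → ℕ) ≤ n := fun i => Nat.zero_le _
      set ρ : Λ.Path := w.1.seg (Λ.deg a) n with hρdef
      set ρ' : Λ.Path := w.1.seg (Λ.deg a') n with hρ'def
      have hrρ : Λ.src a = Λ.rng ρ := by
        have h := w.1.src_seg 0 (Λ.deg a) n h0a han hnx
        rw [hxa.2] at h; exact h
      have hrρ' : Λ.src a' = Λ.rng ρ' := by
        have h := w.1.src_seg 0 (Λ.deg a') n h0a' han' hnx
        rw [hxa'.2] at h; exact h
      have hcρ : Λ.comp a ρ = w.1.seg 0 n := by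
        have h := w.1.comp_seg 0 (Λ.deg a) n h0a han hnx
        rw [hxa.2] at h; exact h
      have hcρ' : Λ.comp a' ρ' = w.1.seg 0 n := by
        have h := w.1.comp_seg 0 (Λ.deg a') n h0a' han' hnx
        rw [hxa'.2] at h; exact h
      have hdρ : Λ.deg ρ = n - Λ.deg a := w.1.deg_seg _ _ han hnx
      have hdρ' : Λ.deg ρ' = n - Λ.deg a' := w.1.deg_seg _ _ han' hnx
      have hdseg0n : Λ.deg (w.1.seg 0 n) = n := by
        rw [w.1.deg_seg 0 n h0n hnx]
        funext i; simp
      have hmina : (ρ, ρ') ∈ Λ.minPairs a a' := by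
        refine ⟨hrρ, hrρ', by rw [hcρ, hcρ'], ?_⟩
        rw [hcρ, hdseg0n]
      have hff : (fun i => (Λ.deg a i : ℤ) - Λ.deg b i) =
          (fun i => (Λ.deg a' i : ℤ) - Λ.deg b' i) := by
        rw [← hm1, hm2]
      have hmm : ∀ i, (Λ.deg a i : ℤ) - Λ.deg b i =
          (Λ.deg a' i : ℤ) - Λ.deg b' i := fun i => by
        have h := congrFun hff i
        simpa using h
      have hsb : Λ.src b = Λ.rng ρ := by rw [← hab]; exact hrρ
      have hsb' : Λ.src b' = Λ.rng ρ' := by rw [← hab']; exact hrρ'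
      have eaρ : Λ.deg a + Λ.deg ρ = n := by
        funext i
        have h1 : Λ.deg a i ≤ n i := han i
        have h2 := congrFun hdρ i
        simp only [Pi.add_apply, Pi.sub_apply] at h2 ⊢
        omega
      have eaρ' : Λ.deg a' + Λ.deg ρ' = n := by
        funext i
        have h1 : Λ.deg a' i ≤ n i := han' i
        have h2 := congrFun hdρ' i
        simp only [Pi.add_apply, Pi.sub_apply] at h2 ⊢
        omega
      have hNe : Λ.deg b + Λ.deg ρ = Λ.deg b' + Λ.deg ρ' := by
        funext i
        have h1 : Λ.deg a i ≤ n i := han i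
        have h2 : Λ.deg a' i ≤ n i := han' i
        have e2 := congrFun hdρ i
        have e3 := congrFun hdρ' i
        have e4 := hmm i
        simp only [Pi.sub_apply] at e2 e3
        simp only [Pi.add_apply, e2, e3]
        omega
      have hNsup : Λ.deg b + Λ.deg ρ = Λ.deg b ⊔ Λ.deg b' := by
        funext i
        have h1 : Λ.deg a i ≤ n i := han i
        have h2 : Λ.deg a' i ≤ n i := han' i
        have hni : n i = Λ.deg a i ⊔ Λ.deg a' i := by
          rw [hn]; simp only [Pi.sup_apply]
        have e2 := congrFun hdρ i
        have e4 := hmm i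
        simp only [Pi.sub_apply] at e2
        simp only [Pi.add_apply, Pi.sup_apply, e2]
        omega
      have domn : ∀ i, ((Λ.deg a + Λ.deg ρ) i : ℕ∞) ≤ w.1.deg i := by
        intro i; rw [eaρ]; exact hnx i
      have domn' : ∀ i, ((Λ.deg a' + Λ.deg ρ') i : ℕ∞) ≤ w.1.deg i := by
        intro i; rw [eaρ']; exact hnx i
      have hsegaρ : w.1.seg (Λ.deg a) (Λ.deg a + Λ.deg ρ) = ρ := by rw [eaρ]
      have hsegaρ' : w.1.seg (Λ.deg a') (Λ.deg a' + Λ.deg ρ') = ρ' := by rw [eaρ']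
      have hSc1 := SMatch_seg hS1 (Λ.deg ρ) domn
      have hSc2 := SMatch_seg hS2 (Λ.deg ρ') domn'
      have hybρ : HasPrefix w.2.2 (Λ.comp b ρ) :=
        hasPrefix_comp hyb hSc1.1 (hSc1.2.trans hsegaρ)
      have hyb'ρ' : HasPrefix w.2.2 (Λ.comp b' ρ') :=
        hasPrefix_comp hyb' hSc2.1 (hSc2.2.trans hsegaρ')
      have hdcompbρ : Λ.deg (Λ.comp b ρ) = Λ.deg b + Λ.deg ρ := Λ.deg_comp _ _ hsb
      have hdcompb'ρ' : Λ.deg (Λ.comp b' ρ') = Λ.deg b' + Λ.deg ρ' :=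
        Λ.deg_comp _ _ hsb'
      have hcbρ : Λ.comp b ρ = Λ.comp b' ρ' := hasPrefix_unique hybρ hyb'ρ'
        (by rw [hdcompbρ, hdcompb'ρ', hNe])
      have hminb : (ρ, ρ') ∈ Λ.minPairs b b' :=
        ⟨hsb, hsb', hcbρ, by rw [hdcompbρ, hNsup]⟩
      have hdcompaρ : Λ.deg (Λ.comp a ρ) = Λ.deg a + Λ.deg ρ := Λ.deg_comp _ _ hrρ
      have hxPre : HasPrefix w.1 (Λ.comp a ρ) := hasPrefix_comp hxa domn hsegaρ
      have hSfin : SMatch w.1 w.2.2 (Λ.deg (Λ.comp a ρ)) (Λ.deg (Λ.comp b' ρ')) := by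
        rw [hdcompaρ, hdcompb'ρ', ← hNe]
        exact SMatch_shift hS1 (Λ.deg ρ) domn
      have hmfin : w.2.1 = fun i => (Λ.deg (Λ.comp a ρ) i : ℤ) -
          Λ.deg (Λ.comp b' ρ') i := by
        rw [hm1]
        funext i
        have e1 := congrFun hdcompaρ i
        have e2 := congrFun hdcompb'ρ' i
        have e3 := congrFun hNe i
        simp only [Pi.add_apply] at e1 e2 e3
        rw [e1, e2]
        push_cast
        omega
      have hZP : w ∈ Λ.ZP (Λ.comp a ρ) (Λ.comp b' ρ') :=
        mem_ZP_iff.mpr ⟨hmfin, hxPre, hyb'ρ', hSfin⟩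
      refine ⟨(ρ, ρ'), ⟨hmina, hminb⟩, mem_ZPD_iff.mpr ⟨hZP, ?_⟩⟩
      rintro ν hν hcon
      rw [Set.mem_union] at hν
      rcases hν with hν | hν
      · rw [mem_extSet_iff] at hν
        obtain ⟨μ, hμG, t, hmin⟩ := hν
        exact hA2 μ hμG
          ((key_ext hab hab' hmina hminb (hG μ hμG) hZP).mpr ⟨ν, t, hmin, hcon⟩)
      · rw [mem_extSet_iff] at hν
        obtain ⟨μ', hμG', t, hmin⟩ := hν
        exact hB2 μ' hμG'
          ((key_ext' hab hab' hmina hminb (hG' μ' hμG') hZP).mpr ⟨ν, t, hmin, hcon⟩)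
    · rintro ⟨⟨γ, γ'⟩, ⟨hmina, hminb⟩, hw⟩
      rw [mem_ZPD_iff] at hw
      obtain ⟨hZP, hwn⟩ := hw
      have hbase := base_of_ext hab hab' hmina hminb hZP
      rw [mem_ZPD_iff, mem_ZPD_iff]
      refine ⟨⟨hbase.1, ?_⟩, hbase.2, ?_⟩
      · intro μ hμG hcon
        obtain ⟨ν, t, hmin, hmem⟩ :=
          (key_ext hab hab' hmina hminb (hG μ hμG) hZP).mp hcon
        exact hwn ν (Set.mem_union_left _ (mem_extSet_iff.mpr ⟨μ, hμG, t, hmin⟩)) hmem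
      · intro μ' hμG' hcon
        obtain ⟨ν, t, hmin, hmem⟩ :=
          (key_ext' hab hab' hmina hminb (hG' μ' hμG') hZP).mp hcon
        exact hwn ν (Set.mem_union_right _ (mem_extSet_iff.mpr ⟨μ', hμG', t, hmin⟩)) hmem
  · rintro ⟨γ, γ'⟩ ⟨hx1, hx2⟩ ⟨δ, δ'⟩ ⟨hy1, hy2⟩ hne
    rw [Set.eq_empty_iff_forall_notMem]
    rintro w ⟨hw1, hw2⟩
    rw [mem_ZPD_iff] at hw1 hw2
    have h1 := hw1.1
    have h2 := hw2.1
    rw [mem_ZP_iff] at h1 h2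
    obtain ⟨hraγ, hraγ', hcγ, hdγ⟩ := hx1
    obtain ⟨hrbγ, hrbγ', hcγ2, hdγ2⟩ := hx2
    obtain ⟨hraδ, hraδ', hcδ, hdδ⟩ := hy1
    obtain ⟨hrbδ, hrbδ', hcδ2, hdδ2⟩ := hy2
    have hdac : Λ.deg (Λ.comp a γ) = Λ.deg (Λ.comp a δ) := by rw [hdγ, hdδ]
    have hpre : Λ.comp a γ = Λ.comp a δ := hasPrefix_unique h1.2.1 h2.2.1 hdac
    have hγδ : γ = δ := comp_left_cancel hraγ hraδ hpre
    have hdbc : Λ.deg (Λ.comp b' γ') = Λ.deg (Λ.comp b' δ') := by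
      rw [← hcγ2, ← hcδ2, hdγ2, hdδ2]
    have hpre' : Λ.comp b' γ' = Λ.comp b' δ' := hasPrefix_unique h1.2.2.1 h2.2.2.1 hdbc
    have hγ'δ' : γ' = δ' := comp_left_cancel hrbγ' hrbδ' hpre'
    exact hne (by rw [hγδ, hγ'δ'])
end
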